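/- arXiv:1208.1558 — 8 statements merged into one kernel-verified Lean document; each statement's English description precedes it below -/
import Mathlib

section
/- Let W be a nonnegative integer valued random variable with finite mean. If E[(1-p)(r+W)g(W+1) - W g(W)] = 0 for all bounded functions g: ℤ≥0 → ℝ, then W has the negative binomial distribution NB(r,p). -/
open MeasureTheory Set
open scoped Nat

/-- The negative binomial pmf `NB(r,p)`: `P(Y=k) = Γ(r+k)/(k! Γ(r)) (1-p)^k p^r`. -/
noncomputable def nbPMF (r p : ℝ) (k : ℕ) : ℝ :=
  Real.Gamma (r + k) / (Nat.factorial k * Real.Gamma r) * (1 - p) ^ k * p ^ r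


lemma integrableOn_aux {a c : ℝ} (ha : 0 < a) (hc : 0 < c) :
    IntegrableOn (fun t : ℝ => t ^ (a-1) * Real.exp (-(c*t))) (Set.Ioi 0) := by
  by_contra h
  have h0 : ∫ t in Set.Ioi 0, t ^ (a-1) * Real.exp (-(c*t)) = 0 := integral_undef h
  rw [Real.integral_rpow_mul_exp_neg_mul_Ioi ha hc] at h0
  have h1 := Real.Gamma_pos_of_pos ha
  have h2 : (0:ℝ) < (1/c) ^ a := Real.rpow_pos_of_pos (by positivity) a
  nlinarith

lemma hasSum_exp_real (x : ℝ) : HasSum (fun n : ℕ => x ^ n / n !) (Real.exp x) := by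
  rw [Real.exp_eq_exp_ℝ]
  exact NormedSpace.expSeries_div_hasSum_exp x

lemma hasSum_nb {r x : ℝ} (hr : 0 < r) (hx0 : 0 ≤ x) (hx1 : x < 1) :
    HasSum (fun n : ℕ => Real.Gamma (r + n) / (n ! * Real.Gamma r) * x ^ n)
      ((1 - x) ^ (-r)) := by
  have hΓ := Real.Gamma_pos_of_pos hr
  set a : ℕ → ℝ := fun n => Real.Gamma (r + n) / (n ! * Real.Gamma r) * x ^ n with ha
  have hanneg : ∀ n, 0 ≤ a n := by
    intro n
    have : (0:ℝ) < Real.Gamma (r + n) := Real.Gamma_pos_of_pos (by positivity)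
    have : (0:ℝ) < (n ! : ℝ) := by positivity
    positivity
  -- step A
  have stepA : ∀ n : ℕ, ENNReal.ofReal (a n) =
      ∫⁻ t in Ioi (0:ℝ), ENNReal.ofReal (x ^ n / (n ! * Real.Gamma r) *
        (t ^ (r + n - 1) * Real.exp (-t))) := by
    intro n
    have hrn : (0:ℝ) < r + n := by positivity
    have hint : ∫ t in Ioi (0:ℝ), t ^ (r + n - 1) * Real.exp (-t) = Real.Gamma (r + n) := by
      have := Real.integral_rpow_mul_exp_neg_mul_Ioi hrn one_pos
      simpa using this
    have haeq : a n = ∫ t in Ioi (0:ℝ), x ^ n / (n ! * Real.Gamma r) *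
        (t ^ (r + n - 1) * Real.exp (-t)) := by
      rw [integral_const_mul, hint, ha]; ring
    rw [haeq, MeasureTheory.ofReal_integral_eq_lintegral_ofReal]
    · have : IntegrableOn (fun t : ℝ => t ^ (r + n - 1) * Real.exp (-(1*t))) (Ioi 0) :=
        integrableOn_aux hrn one_pos
      simp only [one_mul] at this
      exact this.const_mul _
    · refine (ae_restrict_iff' measurableSet_Ioi).2 (Filter.Eventually.of_forall fun t ht => ?_)
      have ht' : (0:ℝ) < t := ht
      have : (0:ℝ) < (n ! : ℝ) := by positivity
      positivity
  -- step B: swap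
  have meas : ∀ n : ℕ, AEMeasurable (fun t : ℝ => ENNReal.ofReal (x ^ n / (n ! * Real.Gamma r) *
      (t ^ (r + n - 1) * Real.exp (-t)))) ((volume : Measure ℝ).restrict (Ioi 0)) := by
    intro n
    apply Measurable.aemeasurable
    apply Measurable.ennreal_ofReal
    fun_prop
  have stepB : ∑' n : ℕ, ENNReal.ofReal (a n) =
      ∫⁻ t in Ioi (0:ℝ), ∑' n : ℕ, ENNReal.ofReal (x ^ n / (n ! * Real.Gamma r) *
        (t ^ (r + n - 1) * Real.exp (-t))) := by
    simp_rw [stepA]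
    rw [← lintegral_tsum meas]
  -- step C: pointwise sum
  have stepC : ∀ t ∈ Ioi (0:ℝ), (∑' n : ℕ, ENNReal.ofReal (x ^ n / (n ! * Real.Gamma r) *
      (t ^ (r + n - 1) * Real.exp (-t)))) =
      ENNReal.ofReal (1 / Real.Gamma r * (t ^ (r - 1) * Real.exp (-((1-x)*t)))) := by
    intro t ht
    have ht' : (0:ℝ) < t := ht
    have hterm : ∀ n : ℕ, x ^ n / (n ! * Real.Gamma r) * (t ^ (r + n - 1) * Real.exp (-t))
        = (1 / Real.Gamma r * (t ^ (r-1) * Real.exp (-t))) * ((x*t) ^ n / n !) := by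
      intro n
      have : t ^ (r + n - 1) = t ^ (r - 1) * t ^ (n : ℕ) := by
        rw [← Real.rpow_natCast t n, ← Real.rpow_add ht']
        ring_nf
      rw [this]
      have : (0:ℝ) < (n ! : ℝ) := by positivity
      field_simp
      ring
    have hsum : HasSum (fun n : ℕ => (1 / Real.Gamma r * (t ^ (r-1) * Real.exp (-t))) *
        ((x*t) ^ n / n !)) ((1 / Real.Gamma r * (t ^ (r-1) * Real.exp (-t))) * Real.exp (x*t)) :=
      (hasSum_exp_real (x*t)).mul_left _
    have hnn : ∀ n : ℕ, 0 ≤ (1 / Real.Gamma r * (t ^ (r-1) * Real.exp (-t))) * ((x*t) ^ n / n !) := by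
      intro n
      have : (0:ℝ) < (n ! : ℝ) := by positivity
      positivity
    calc ∑' n : ℕ, ENNReal.ofReal (x ^ n / (n ! * Real.Gamma r) * (t ^ (r + n - 1) * Real.exp (-t)))
        = ∑' n : ℕ, ENNReal.ofReal ((1 / Real.Gamma r * (t ^ (r-1) * Real.exp (-t))) * ((x*t) ^ n / n !)) := by
          simp_rw [hterm]
      _ = ENNReal.ofReal (∑' n : ℕ, (1 / Real.Gamma r * (t ^ (r-1) * Real.exp (-t))) * ((x*t) ^ n / n !)) :=
          (ENNReal.ofReal_tsum_of_nonneg hnn hsum.summable).symm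
      _ = ENNReal.ofReal (1 / Real.Gamma r * (t ^ (r - 1) * Real.exp (-((1-x)*t)))) := by
          rw [hsum.tsum_eq]
          congr 1
          rw [show -((1-x)*t) = -t + x*t by ring, Real.exp_add]
          ring
  -- step D
  have hp : (0:ℝ) < 1 - x := by linarith
  have stepD : ∫⁻ t in Ioi (0:ℝ), ENNReal.ofReal (1 / Real.Gamma r * (t ^ (r - 1) *
      Real.exp (-((1-x)*t)))) = ENNReal.ofReal ((1-x) ^ (-r)) := by
    rw [← MeasureTheory.ofReal_integral_eq_lintegral_ofReal]
    · rw [integral_const_mul, Real.integral_rpow_mul_exp_neg_mul_Ioi hr hp]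
      congr 1
      have e1 : ((1:ℝ)/(1-x)) ^ r = ((1-x) ^ r)⁻¹ := by
        rw [one_div, ← Real.rpow_neg_one (1-x), ← Real.rpow_mul hp.le, neg_one_mul,
          Real.rpow_neg hp.le]
      rw [e1, Real.rpow_neg hp.le]
      field_simp
    · exact (integrableOn_aux hr hp).const_mul _
    · refine (ae_restrict_iff' measurableSet_Ioi).2 (Filter.Eventually.of_forall fun t ht => ?_)
      have ht' : (0:ℝ) < t := ht
      positivity
  have key : ∑' n : ℕ, ENNReal.ofReal (a n) = ENNReal.ofReal ((1-x) ^ (-r)) := by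
    rw [stepB, setLIntegral_congr_fun measurableSet_Ioi stepC, stepD]
  -- convert to real HasSum
  have hne : ∑' n : ℕ, ENNReal.ofReal (a n) ≠ ⊤ := by rw [key]; exact ENNReal.ofReal_ne_top
  have hsummable : Summable a := by
    have := ENNReal.summable_toReal hne
    simpa [ENNReal.toReal_ofReal, hanneg] using this
  have htsum : ∑' n, a n = (1-x) ^ (-r) := by
    have h1 : (∑' n : ℕ, ENNReal.ofReal (a n)).toReal = ∑' n, (ENNReal.ofReal (a n)).toReal :=
      ENNReal.tsum_toReal_eq fun n => ENNReal.ofReal_ne_top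
    rw [key] at h1
    rw [ENNReal.toReal_ofReal (Real.rpow_nonneg hp.le _)] at h1
    have h2 : ∑' n, (ENNReal.ofReal (a n)).toReal = ∑' n, a n :=
      tsum_congr fun n => ENNReal.toReal_ofReal (hanneg n)
    rw [← h2]; exact h1.symm
  exact htsum ▸ hsummable.hasSum


/-- If a nonnegative integer valued random variable `W` with finite mean satisfies
`E[(1-p)(r+W)g(W+1) - W g(W)] = 0` for all bounded `g`, then `W ~ NB(r,p)`. -/
theorem stmt1 {Ω : Type*} [MeasurableSpace Ω] (μ : Measure Ω) [IsProbabilityMeasure μ]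
    (W : Ω → ℕ) (hW : Measurable W)
    (r p : ℝ) (hr : 0 < r) (hp0 : 0 < p) (hp1 : p ≤ 1)
    (hmean : Summable fun k : ℕ => (k : ℝ) * (μ (W ⁻¹' {k})).toReal)
    (hchar : ∀ g : ℕ → ℝ, (∃ C, ∀ k, |g k| ≤ C) →
      ∑' k : ℕ, (μ (W ⁻¹' {k})).toReal * ((1 - p) * (r + k) * g (k + 1) - k * g k) = 0) :
    ∀ k : ℕ, (μ (W ⁻¹' {k})).toReal = nbPMF r p k := by
  set q : ℕ → ℝ := fun k => (μ (W ⁻¹' {k})).toReal with hq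
  -- Step 1: recurrence
  have hrec : ∀ n : ℕ, ((n:ℝ) + 1) * q (n+1) = (1-p) * (r + n) * q n := by
    intro n
    set g : ℕ → ℝ := fun k => if k = n + 1 then (1:ℝ) else 0 with hg
    have hb : ∃ C, ∀ k, |g k| ≤ C := ⟨1, fun k => by by_cases h : k = n+1 <;> simp [hg, h]⟩
    have h0 := hchar g hb
    set f : ℕ → ℝ := fun k => q k * ((1 - p) * (r + k) * g (k + 1) - k * g k) with hf
    have hfz : ∀ k ∉ ({n, n+1} : Finset ℕ), f k = 0 := by
      intro k hk
      simp only [Finset.mem_insert, Finset.mem_singleton] at hk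
      push_neg at hk
      have h1 : g (k+1) = 0 := by simp [hg]; omega
      have h2 : g k = 0 := by simp [hg]; omega
      simp [hf, h1, h2]
    have htsum : ∑' k, f k = ∑ k ∈ ({n, n+1} : Finset ℕ), f k := tsum_eq_sum hfz
    have hne : n ≠ n + 1 := by omega
    rw [Finset.sum_pair hne] at htsum
    have hfn : f n = (1-p) * (r + n) * q n := by simp [hf, hg]; ring
    have hfn1 : f (n+1) = -(((n:ℝ)+1) * q (n+1)) := by
      have e1 : g (n+1+1) = 0 := by simp [hg]
      have e2 : g (n+1) = 1 := by simp [hg]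
      simp only [hf, e1, e2]
      push_cast
      ring
    rw [htsum, hfn, hfn1] at h0
    linarith
  -- Step 2: closed form
  have hform : ∀ k : ℕ, q k = q 0 * (Real.Gamma (r + k) / (k ! * Real.Gamma r) * (1-p) ^ k) := by
    intro k
    induction k with
    | zero =>
      simp [Real.Gamma_pos_of_pos hr |>.ne']
    | succ k ih =>
      have hrk : (0:ℝ) < r + k := by positivity
      have hkk : ((k:ℝ) + 1) ≠ 0 := by positivity
      have h1 : q (k+1) = (1-p) * (r + k) * q k / ((k:ℝ)+1) := by
        rw [eq_div_iff hkk]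
        linarith [hrec k]
      rw [h1, ih]
      have hΓ : Real.Gamma (r + (k+1 : ℕ)) = (r + k) * Real.Gamma (r + k) := by
        push_cast
        rw [show r + ((k:ℝ)+1) = (r + k) + 1 by ring, Real.Gamma_add_one hrk.ne']
      rw [hΓ]
      have hfact : ((k+1)! : ℝ) = ((k:ℝ)+1) * k ! := by
        rw [Nat.factorial_succ]; push_cast; ring
      rw [hfact]
      have hΓr := Real.Gamma_pos_of_pos hr
      have hkf : (0:ℝ) < (k ! : ℝ) := by positivity
      field_simp
      ring
  -- Step 3: sum of q equals 1
  have hsum1 : ∑' k, q k = 1 := by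
    have hcover : (⋃ k : ℕ, W ⁻¹' {k}) = univ := by
      ext ω; simp [mem_iUnion]
    have hdisj : Pairwise (Function.onFun Disjoint fun k : ℕ => W ⁻¹' {k}) := by
      intro i j hij
      exact Disjoint.preimage W (by simpa using hij)
    have hmeas : ∀ k : ℕ, MeasurableSet (W ⁻¹' {k}) := fun k => hW (measurableSet_singleton k)
    have h1 : ∑' k : ℕ, μ (W ⁻¹' {k}) = 1 := by
      rw [← measure_iUnion hdisj hmeas, hcover, measure_univ]
    have h2 : (∑' k : ℕ, μ (W ⁻¹' {k})).toReal = ∑' k : ℕ, (μ (W ⁻¹' {k})).toReal :=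
      ENNReal.tsum_toReal_eq fun k => measure_ne_top μ _
    rw [h1] at h2
    simpa [hq] using h2.symm
  -- Step 4: identify q 0
  have hx0 : (0:ℝ) ≤ 1 - p := by linarith
  have hx1 : 1 - p < 1 := by linarith
  have hbin := hasSum_nb hr hx0 hx1
  rw [show (1 : ℝ) - (1 - p) = p by ring] at hbin
  have hbin0 := hbin.mul_left (q 0)
  have htq : ∑' k, q k = q 0 * p ^ (-r) := by
    rw [← hbin0.tsum_eq]
    exact tsum_congr hform
  have hq0 : q 0 = p ^ r := by
    rw [hsum1] at htq
    have hpr : (0:ℝ) < p ^ r := Real.rpow_pos_of_pos hp0 r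
    rw [Real.rpow_neg hp0.le] at htq
    field_simp at htq
    linarith
  intro k
  rw [show (μ (W ⁻¹' {k})).toReal = q k from rfl, hform k, hq0, nbPMF]
  ring
end

section
/- For the Pólya urn count U_{r,n} (number of white balls drawn in n-1 draws from an urn starting with weight r of white and 1 black, where at each draw a white ball is drawn with probability (r+current white count)/(r+number of previous draws), and drawing white adds one to the white count), and any function g: ℤ≥0 → ℝ such that expectations are defined, E[(U_{r,n}/r + 1) g(U_{r,n}+1) - (U_{r,n}/r) g(U_{r,n})] = g(n) for every n ≥ 1. -/
/-- `polyaPMF r d k` is the probability that `k` white balls have been drawn in `d` draws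
from a Pólya urn started with weight `r` of white and `1` black: at the draw taking the
count of previous draws from `d` to `d+1`, a white ball is drawn with probability
`(r + current white count)/(r + d + 1)`.  Thus `U_{r,n}` of the paper, the number of white
balls drawn in `n-1` draws, has pmf `polyaPMF r (n-1)`. -/
noncomputable def polyaPMF (r : ℝ) : ℕ → ℕ → ℝ
  | 0, k => if k = 0 then 1 else 0
  | d + 1, 0 => polyaPMF r d 0 * (1 - r / (r + (d + 1)))
  | d + 1, k + 1 =>
      polyaPMF r d (k + 1) * (1 - (r + (k + 1)) / (r + (d + 1)))
        + polyaPMF r d k * ((r + k) / (r + (d + 1)))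

lemma polyaPMF_eq_zero (r : ℝ) : ∀ d k, d < k → polyaPMF r d k = 0 := by
  intro d
  induction d with
  | zero => intro k hk; cases k with
      | zero => omega
      | succ k => simp [polyaPMF]
  | succ d ih =>
      intro k hk
      cases k with
      | zero => omega
      | succ k =>
          have h1 : polyaPMF r d (k+1) = 0 := ih _ (by omega)
          have h2 : polyaPMF r d k = 0 := ih _ (by omega)
          simp [polyaPMF, h1, h2]

lemma key (r : ℝ) (hr : 0 < r) : ∀ (d : ℕ) (g : ℕ → ℝ),
    ∑ k ∈ Finset.range (d+1), polyaPMF r d k *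
      (((k : ℝ) / r + 1) * g (k + 1) - ((k : ℝ) / r) * g k) = g (d+1) := by
  intro d
  induction d with
  | zero => intro g; simp [polyaPMF]
  | succ d ih =>
    intro g
    set T : ℕ → ℝ := fun k => ((k : ℝ) / r + 1) * g (k + 1) - ((k : ℝ) / r) * g k with hT
    have hr' : r ≠ 0 := hr.ne'
    have hpos : (0:ℝ) < r + (d+1) := by positivity
    have h1 : ∑ k ∈ Finset.range (d+1), polyaPMF r d k * T k = g (d+1) := ih g
    have h2 : ∑ k ∈ Finset.range (d+1), polyaPMF r d k *
        (((k : ℝ) / r + 1) * T (k + 1) - ((k : ℝ) / r) * T k) = T (d+1) := ih T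
    have hz : polyaPMF r d (d+1) = 0 := polyaPMF_eq_zero r d (d+1) (by omega)
    show ∑ k ∈ Finset.range (d+2), polyaPMF r (d+1) k * T k = g (d+2)
    have split : ∑ k ∈ Finset.range (d+2), polyaPMF r (d+1) k * T k
        = (∑ k ∈ Finset.range (d+2),
            polyaPMF r d k * (1 - (r + k) / (r + (d+1))) * T k)
          + ∑ k ∈ Finset.range (d+1),
            polyaPMF r d k * ((r + k) / (r + (d+1))) * T (k+1) := by
      rw [Finset.sum_range_succ' _ (d+1),
        Finset.sum_range_succ'
          (fun k => polyaPMF r d k * (1 - (r + (k:ℝ)) / (r + (d+1))) * T k) (d+1)]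
      simp only [polyaPMF]
      rw [add_right_comm, ← Finset.sum_add_distrib]
      congr 1
      · refine Finset.sum_congr rfl fun k _ => ?_
        push_cast
        ring
      · push_cast; ring
    rw [split, Finset.sum_range_succ, hz]
    have comb : (∑ k ∈ Finset.range (d+1),
            polyaPMF r d k * (1 - (r + k) / (r + (d+1))) * T k)
          + ∑ k ∈ Finset.range (d+1),
            polyaPMF r d k * ((r + k) / (r + (d+1))) * T (k+1)
        = (1 - r / (r + (d+1))) * (∑ k ∈ Finset.range (d+1), polyaPMF r d k * T k)
          + (r / (r + (d+1))) * (∑ k ∈ Finset.range (d+1), polyaPMF r d k *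
              (((k : ℝ) / r + 1) * T (k + 1) - ((k : ℝ) / r) * T k)) := by
      rw [Finset.mul_sum, Finset.mul_sum, ← Finset.sum_add_distrib,
        ← Finset.sum_add_distrib]
      refine Finset.sum_congr rfl fun k _ => ?_
      field_simp
      ring
    rw [zero_mul, zero_mul, add_zero, comb, h1, h2]
    have hTd : T (d+1) = ((d+1:ℝ) / r + 1) * g (d + 2) - ((d+1:ℝ) / r) * g (d+1) := by
      simp [hT]
    rw [hTd]
    field_simp
    ring

/-- `E[(U_{r,n}/r + 1) g(U_{r,n}+1) - (U_{r,n}/r) g(U_{r,n})] = g(n)` for all `n ≥ 1`.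
Since `U_{r,n} ≤ n - 1`, the expectation is the finite sum over `k < n`. -/
theorem stmt2 (r : ℝ) (hr : 0 < r) (n : ℕ) (hn : 1 ≤ n) (g : ℕ → ℝ) :
    ∑ k ∈ Finset.range n, polyaPMF r (n - 1) k *
      (((k : ℝ) / r + 1) * g (k + 1) - ((k : ℝ) / r) * g k) = g n := by
  obtain ⟨m, rfl⟩ : ∃ m, n = m + 1 := ⟨n - 1, by omega⟩
  simpa using key r hr m g
end

section
/- For the Pólya urn variable U_{r,n} and any k ≥ 1, the falling factorial moment satisfies E[U_{r,n}(U_{r,n}-1)⋯(U_{r,n}-k+1)] = r·(n-1)(n-2)⋯(n-k)/(r+k). -/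
lemma polya_gt (r : ℝ) : ∀ d j, d < j → polyaPMF r d j = 0 := by
  intro d
  induction d with
  | zero =>
    intro j h
    match j with
    | jj + 1 => simp [polyaPMF]
  | succ d ih =>
    intro j h
    match j with
    | jj + 1 =>
      simp only [polyaPMF]
      rw [ih _ (by omega), ih _ (by omega)]
      ring

lemma shift_sum (r : ℝ) (d : ℕ) (g : ℕ → ℝ) :
    ∑ j ∈ Finset.range (d + 1), polyaPMF r d (j + 1) * g (j + 1)
      = ∑ j ∈ Finset.range (d + 1), polyaPMF r d j * g j - polyaPMF r d 0 * g 0 := by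
  have h1 := Finset.sum_range_succ' (fun j => polyaPMF r d j * g j) (d + 1)
  have h2 := Finset.sum_range_succ (fun j => polyaPMF r d j * g j) (d + 1)
  rw [polya_gt r d (d + 1) (by omega)] at h2
  beta_reduce at h1 h2
  linarith

lemma polya_sum_one (r : ℝ) (hr : 0 < r) : ∀ d, ∑ j ∈ Finset.range (d + 1), polyaPMF r d j = 1 := by
  intro d
  induction d with
  | zero => simp [polyaPMF]
  | succ d ih =>
    have hc : r + ((d : ℝ) + 1) ≠ 0 := by positivity
    rw [Finset.sum_range_succ']
    simp only [polyaPMF]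
    rw [Finset.sum_add_distrib]
    have h1 : ∑ j ∈ Finset.range (d + 1), polyaPMF r d (j + 1) * (1 - (r + (↑j + 1)) / (r + (↑d + 1)))
        = ∑ j ∈ Finset.range (d + 1),
            polyaPMF r d (j + 1) * ((fun j : ℕ => 1 - (r + (j : ℝ)) / (r + (↑d + 1))) (j + 1)) := by
      apply Finset.sum_congr rfl; intro j _; push_cast; ring
    rw [h1, shift_sum r d (fun j : ℕ => 1 - (r + (j : ℝ)) / (r + (↑d + 1)))]
    have hsummand : ∀ j : ℕ, polyaPMF r d j * ((fun j : ℕ => 1 - (r + (j : ℝ)) / (r + (↑d + 1))) j)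
          + polyaPMF r d j * ((r + ↑j) / (r + (↑d + 1))) = polyaPMF r d j := by
      intro j
      field_simp
      ring
    have h2 : ∑ j ∈ Finset.range (d + 1),
        (polyaPMF r d j * ((fun j : ℕ => 1 - (r + (j : ℝ)) / (r + (↑d + 1))) j)
          + polyaPMF r d j * ((r + ↑j) / (r + (↑d + 1)))) = 1 := by
      rw [Finset.sum_congr rfl (fun j _ => hsummand j)]; exact ih
    rw [Finset.sum_add_distrib] at h2
    simp only [Nat.cast_zero, add_zero] at *
    linarith

lemma prod_shift (x : ℝ) (m : ℕ) :
    ∏ i ∈ Finset.range (m + 1), (x + 1 - i) = (x + 1) * ∏ i ∈ Finset.range m, (x - i) := by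
  rw [Finset.prod_range_succ' (fun i => x + 1 - (i : ℝ)) m]
  simp only [show ∀ i : ℕ, x + 1 - (↑(i + 1) : ℝ) = x - i from fun i => by push_cast; ring,
    Nat.cast_zero]
  ring

lemma summand_id (r c x : ℝ) (m : ℕ) (hc : c ≠ 0) :
    (1 - (r + x) / c) * ∏ i ∈ Finset.range (m + 1), (x - i)
      + ((r + x) / c) * ∏ i ∈ Finset.range (m + 1), (x + 1 - i)
    = (1 + ((m : ℝ) + 1) / c) * ∏ i ∈ Finset.range (m + 1), (x - i)
      + (((m : ℝ) + 1) * (r + m) / c) * ∏ i ∈ Finset.range m, (x - i) := by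
  rw [prod_shift, Finset.prod_range_succ]
  field_simp
  ring

lemma polya_key (r : ℝ) (hr : 0 < r) :
    ∀ d k, (r + k) * ∑ j ∈ Finset.range (d + 1),
        polyaPMF r d j * ∏ i ∈ Finset.range k, ((j : ℝ) - i)
      = r * ∏ i ∈ Finset.range k, ((d : ℝ) - i) := by
  intro d
  induction d with
  | zero =>
    intro k
    match k with
    | 0 => simp [polyaPMF]
    | m + 1 =>
      have hz : ∏ i ∈ Finset.range (m + 1), ((0 : ℝ) - (i : ℝ)) = 0 :=
        Finset.prod_eq_zero (Finset.mem_range.2 (Nat.succ_pos m)) (by norm_num)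
      simp [polyaPMF]
      right
      exact Finset.prod_eq_zero (Finset.mem_range.2 (Nat.succ_pos m)) (by norm_num)
  | succ d ih =>
    intro k
    match k with
    | 0 => simp [polya_sum_one r hr (d + 1)]
    | m + 1 =>
      have hc : r + ((d : ℝ) + 1) ≠ 0 := by positivity
      have hm : r + (m : ℝ) ≠ 0 := by positivity
      have hm1 : r + ((m : ℝ) + 1) ≠ 0 := by positivity
      have hS : ∑ j ∈ Finset.range (d + 1 + 1),
            polyaPMF r (d + 1) j * ∏ i ∈ Finset.range (m + 1), ((j : ℝ) - i)
          = (1 + ((m : ℝ) + 1) / (r + ((d : ℝ) + 1))) *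
              ∑ j ∈ Finset.range (d + 1), polyaPMF r d j * ∏ i ∈ Finset.range (m + 1), ((j : ℝ) - i)
            + (((m : ℝ) + 1) * (r + (m : ℝ)) / (r + ((d : ℝ) + 1))) *
              ∑ j ∈ Finset.range (d + 1), polyaPMF r d j * ∏ i ∈ Finset.range m, ((j : ℝ) - i) := by
        rw [Finset.sum_range_succ']
        simp only [polyaPMF]
        have e1 : ∀ j ∈ Finset.range (d + 1),
            (polyaPMF r d (j + 1) * (1 - (r + ((j : ℝ) + 1)) / (r + ((d : ℝ) + 1)))
              + polyaPMF r d j * ((r + (j : ℝ)) / (r + ((d : ℝ) + 1))))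
              * ∏ i ∈ Finset.range (m + 1), ((↑(j + 1) : ℝ) - i)
            = polyaPMF r d (j + 1) * ((fun j : ℕ => (1 - (r + (j : ℝ)) / (r + ((d : ℝ) + 1)))
                  * ∏ i ∈ Finset.range (m + 1), ((j : ℝ) - i)) (j + 1))
              + polyaPMF r d j * (((r + (j : ℝ)) / (r + ((d : ℝ) + 1)))
                  * ∏ i ∈ Finset.range (m + 1), ((↑(j + 1) : ℝ) - i)) := by
          intro j _
          push_cast
          ring
        rw [Finset.sum_congr rfl e1, Finset.sum_add_distrib,
          shift_sum r d (fun j : ℕ => (1 - (r + (j : ℝ)) / (r + ((d : ℝ) + 1)))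
            * ∏ i ∈ Finset.range (m + 1), ((j : ℝ) - i))]
        have e2 : ∀ j ∈ Finset.range (d + 1),
            polyaPMF r d j * ((fun j : ℕ => (1 - (r + (j : ℝ)) / (r + ((d : ℝ) + 1)))
                * ∏ i ∈ Finset.range (m + 1), ((j : ℝ) - i)) j)
              + polyaPMF r d j * (((r + (j : ℝ)) / (r + ((d : ℝ) + 1)))
                * ∏ i ∈ Finset.range (m + 1), ((↑(j + 1) : ℝ) - i))
            = (1 + ((m : ℝ) + 1) / (r + ((d : ℝ) + 1)))
                * (polyaPMF r d j * ∏ i ∈ Finset.range (m + 1), ((j : ℝ) - i))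
              + (((m : ℝ) + 1) * (r + (m : ℝ)) / (r + ((d : ℝ) + 1)))
                * (polyaPMF r d j * ∏ i ∈ Finset.range m, ((j : ℝ) - i)) := by
          intro j _
          have hid := summand_id r (r + ((d : ℝ) + 1)) (j : ℝ) m hc
          push_cast
          linear_combination polyaPMF r d j * hid
        have e3 : ∑ j ∈ Finset.range (d + 1),
            (polyaPMF r d j * ((fun j : ℕ => (1 - (r + (j : ℝ)) / (r + ((d : ℝ) + 1)))
                * ∏ i ∈ Finset.range (m + 1), ((j : ℝ) - i)) j)
              + polyaPMF r d j * (((r + (j : ℝ)) / (r + ((d : ℝ) + 1)))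
                * ∏ i ∈ Finset.range (m + 1), ((↑(j + 1) : ℝ) - i)))
            = (1 + ((m : ℝ) + 1) / (r + ((d : ℝ) + 1))) *
                ∑ j ∈ Finset.range (d + 1), polyaPMF r d j * ∏ i ∈ Finset.range (m + 1), ((j : ℝ) - i)
              + (((m : ℝ) + 1) * (r + (m : ℝ)) / (r + ((d : ℝ) + 1))) *
                ∑ j ∈ Finset.range (d + 1), polyaPMF r d j * ∏ i ∈ Finset.range m, ((j : ℝ) - i) := by
          rw [Finset.sum_congr rfl e2, Finset.sum_add_distrib, Finset.mul_sum, Finset.mul_sum]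
        rw [Finset.sum_add_distrib] at e3
        beta_reduce at e3
        have hcancel : polyaPMF r d 0 * ((1 - (r + ((0 : ℕ) : ℝ)) / (r + ((d : ℝ) + 1)))
              * ∏ i ∈ Finset.range (m + 1), (((0 : ℕ) : ℝ) - ↑i))
            = polyaPMF r d 0 * (1 - r / (r + ((d : ℝ) + 1)))
              * ∏ i ∈ Finset.range (m + 1), (((0 : ℕ) : ℝ) - ↑i) := by
          push_cast
          ring
        linarith [e3, hcancel]
      have h1 := ih (m + 1)
      have h2 := ih m
      rw [Finset.prod_range_succ] at h1
      push_cast at h1 h2 ⊢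
      have v1 : ∑ j ∈ Finset.range (d + 1), polyaPMF r d j * ∏ i ∈ Finset.range (m + 1), ((j : ℝ) - i)
          = r * ((∏ i ∈ Finset.range m, ((d : ℝ) - i)) * ((d : ℝ) - m)) / (r + ((m : ℝ) + 1)) := by
        rw [eq_div_iff hm1]
        linear_combination h1
      have v2 : ∑ j ∈ Finset.range (d + 1), polyaPMF r d j * ∏ i ∈ Finset.range m, ((j : ℝ) - i)
          = r * (∏ i ∈ Finset.range m, ((d : ℝ) - i)) / (r + (m : ℝ)) := by
        rw [eq_div_iff hm]
        linear_combination h2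
      rw [hS, v1, v2, prod_shift (d : ℝ) m]
      field_simp
      ring

/-- Falling factorial moments of the Pólya urn count:
`E[U_{r,n}(U_{r,n}-1)⋯(U_{r,n}-k+1)] = r (n-1)(n-2)⋯(n-k)/(r+k)`.
Since `U_{r,n} ≤ n-1` the expectation is a finite sum over `j < n`. -/
theorem stmt4 (r : ℝ) (hr : 0 < r) (n k : ℕ) (hn : 1 ≤ n) (hk : 1 ≤ k) :
    ∑ j ∈ Finset.range n, polyaPMF r (n - 1) j * ∏ i ∈ Finset.range k, ((j : ℝ) - i)
      = r * (∏ i ∈ Finset.range k, ((n : ℝ) - 1 - i)) / (r + k) := by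
  obtain ⟨d, rfl⟩ : ∃ d, n = d + 1 := ⟨n - 1, by omega⟩
  have h := polya_key r hr d k
  have hk0 : r + (k : ℝ) ≠ 0 := by positivity
  rw [eq_div_iff hk0]
  simp only [Nat.add_sub_cancel]
  push_cast
  have hp : ∏ i ∈ Finset.range k, ((d : ℝ) + 1 - 1 - i) = ∏ i ∈ Finset.range k, ((d : ℝ) - i) :=
    Finset.prod_congr rfl (fun i _ => by ring)
  rw [hp]
  linear_combination h
end

section
/- If r > 0 and 0 ≤ ε < p ≤ 1, then the total variation distance between NB(r,p) and NB(r,p-ε) is at most rε/(p-ε). -/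
open MeasureTheory Real Set

lemma nbPMF_nonneg {r p : ℝ} (hr : 0 < r) (hp0 : 0 ≤ p) (hp1 : p ≤ 1) (k : ℕ) :
    0 ≤ nbPMF r p k := by
  have h1 : 0 < Real.Gamma (r + k) := Real.Gamma_pos_of_pos (by positivity)
  have h2 : 0 < Real.Gamma r := Real.Gamma_pos_of_pos hr
  have h3 : (0:ℝ) ≤ 1 - p := by linarith
  unfold nbPMF
  positivity

lemma nb_hasSum {r p : ℝ} (hr : 0 < r) (hp0 : 0 < p) (hp1 : p ≤ 1) :
    HasSum (fun k => nbPMF r p k) 1 := by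
  have hΓr : 0 < Real.Gamma r := Real.Gamma_pos_of_pos hr
  have hx0 : (0:ℝ) ≤ 1 - p := by linarith
  have hnn : ∀ k, 0 ≤ nbPMF r p k := nbPMF_nonneg hr hp0.le hp1
  have key : ∑' k : ℕ, ENNReal.ofReal (nbPMF r p k) = 1 := by
    have step1 : ∀ k : ℕ, ENNReal.ofReal (nbPMF r p k) =
        ∫⁻ t in Ioi (0:ℝ), ENNReal.ofReal
          ((1 - p) ^ k * p ^ r / (Nat.factorial k * Real.Gamma r)
            * (Real.exp (-t) * t ^ (r + (k:ℝ) - 1))) := by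
      intro k
      have hrk : 0 < r + (k:ℝ) := by positivity
      have hint : IntegrableOn (fun t : ℝ => Real.exp (-t) * t ^ (r + (k:ℝ) - 1)) (Ioi 0) :=
        Real.GammaIntegral_convergent hrk
      have hnn' : (fun _ : ℝ => (0:ℝ)) ≤ᵐ[volume.restrict (Ioi (0:ℝ))] fun t : ℝ =>
          (1 - p) ^ k * p ^ r / (Nat.factorial k * Real.Gamma r)
            * (Real.exp (-t) * t ^ (r + (k:ℝ) - 1)) := by
        refine (ae_restrict_iff' measurableSet_Ioi).mpr (ae_of_all _ fun t ht => ?_)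
        have ht' : (0:ℝ) < t := ht
        positivity
      have h := ofReal_integral_eq_lintegral_ofReal
        (hint.const_mul ((1 - p) ^ k * p ^ r / (Nat.factorial k * Real.Gamma r))) hnn'
      rw [← h, integral_const_mul, ← Real.Gamma_eq_integral hrk]
      unfold nbPMF
      ring_nf
    rw [tsum_congr step1]
    have hmeas : ∀ k : ℕ, AEMeasurable (fun t : ℝ => ENNReal.ofReal
        ((1 - p) ^ k * p ^ r / (Nat.factorial k * Real.Gamma r)
          * (Real.exp (-t) * t ^ (r + (k:ℝ) - 1)))) (volume.restrict (Ioi (0:ℝ))) := by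
      intro k
      apply Measurable.aemeasurable
      apply Measurable.ennreal_ofReal
      fun_prop
    rw [← lintegral_tsum hmeas]
    have hpt : ∀ t ∈ Ioi (0:ℝ), (∑' k : ℕ, ENNReal.ofReal
        ((1 - p) ^ k * p ^ r / (Nat.factorial k * Real.Gamma r)
          * (Real.exp (-t) * t ^ (r + (k:ℝ) - 1))))
        = ENNReal.ofReal (p ^ r / Real.Gamma r * t ^ (r - 1) * Real.exp (-(p * t))) := by
      intro t ht
      have ht' : (0:ℝ) < t := ht
      have hfk : ∀ k : ℕ, (1 - p) ^ k * p ^ r / (Nat.factorial k * Real.Gamma r)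
          * (Real.exp (-t) * t ^ (r + (k:ℝ) - 1))
          = (p ^ r / Real.Gamma r * t ^ (r - 1) * Real.exp (-t)) * (((1 - p) * t) ^ k / Nat.factorial k) := by
        intro k
        have he : r + (k:ℝ) - 1 = (r - 1) + (k:ℝ) := by ring
        rw [he, Real.rpow_add ht', Real.rpow_natCast, mul_pow]
        ring
      have hsum : Summable (fun k : ℕ => (p ^ r / Real.Gamma r * t ^ (r - 1) * Real.exp (-t))
          * (((1 - p) * t) ^ k / Nat.factorial k)) :=
        (Real.summable_pow_div_factorial ((1 - p) * t)).mul_left _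
      have hnn2 : ∀ k : ℕ, 0 ≤ (p ^ r / Real.Gamma r * t ^ (r - 1) * Real.exp (-t))
          * (((1 - p) * t) ^ k / Nat.factorial k) := by
        intro k
        have : (0:ℝ) ≤ (1 - p) * t := by positivity
        positivity
      calc (∑' k : ℕ, ENNReal.ofReal
            ((1 - p) ^ k * p ^ r / (Nat.factorial k * Real.Gamma r)
              * (Real.exp (-t) * t ^ (r + (k:ℝ) - 1))))
          = ∑' k : ℕ, ENNReal.ofReal ((p ^ r / Real.Gamma r * t ^ (r - 1) * Real.exp (-t))
              * (((1 - p) * t) ^ k / Nat.factorial k)) := by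
            exact tsum_congr fun k => by rw [hfk k]
        _ = ENNReal.ofReal (∑' k : ℕ, (p ^ r / Real.Gamma r * t ^ (r - 1) * Real.exp (-t))
              * (((1 - p) * t) ^ k / Nat.factorial k)) :=
            (ENNReal.ofReal_tsum_of_nonneg hnn2 hsum).symm
        _ = ENNReal.ofReal (p ^ r / Real.Gamma r * t ^ (r - 1) * Real.exp (-(p * t))) := by
            congr 1
            rw [tsum_mul_left]
            have hexp : ∑' k : ℕ, ((1 - p) * t) ^ k / (Nat.factorial k : ℝ)
                = Real.exp ((1 - p) * t) := by
              rw [Real.exp_eq_exp_ℝ, NormedSpace.exp_eq_tsum_div]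
            rw [hexp, mul_assoc, ← Real.exp_add,
              show -t + (1 - p) * t = -(p * t) by ring]
    rw [setLIntegral_congr_fun measurableSet_Ioi hpt]
    have hgamma : ∫⁻ t : ℝ, ProbabilityTheory.gammaPDF r p t = 1 :=
      ProbabilityTheory.lintegral_gammaPDF_eq_one hr hp0
    have hIoi : (∫⁻ t in Ioi (0:ℝ),
        ENNReal.ofReal (p ^ r / Real.Gamma r * t ^ (r - 1) * Real.exp (-(p * t))))
        = ∫⁻ t in Ici (0:ℝ), ProbabilityTheory.gammaPDF r p t := by
      rw [← setLIntegral_congr (Ioi_ae_eq_Ici (μ := volume) (a := (0:ℝ)))]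
      refine setLIntegral_congr_fun measurableSet_Ioi (fun t ht => ?_)
      rw [ProbabilityTheory.gammaPDF_of_nonneg (le_of_lt ht)]
    have hIio : (∫⁻ t in Iio (0:ℝ), ProbabilityTheory.gammaPDF r p t) = 0 := by
      rw [setLIntegral_congr_fun (g := fun _ => 0) measurableSet_Iio
        (fun t ht => ProbabilityTheory.gammaPDF_of_neg ht), lintegral_zero]
    rw [hIoi]
    rw [← lintegral_add_compl (ProbabilityTheory.gammaPDF r p)
        (measurableSet_Ici (a := (0:ℝ))), compl_Ici, hIio, add_zero] at hgamma
    exact hgamma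
  have hs : Summable (fun k => nbPMF r p k) := by
    have h := ENNReal.summable_toReal (f := fun k : ℕ => ENNReal.ofReal (nbPMF r p k))
      (by rw [key]; exact ENNReal.one_ne_top)
    exact h.congr fun k => ENNReal.toReal_ofReal (hnn k)
  have ht : ∑' k, nbPMF r p k = 1 := by
    have h2 := ENNReal.tsum_toReal_eq (f := fun k : ℕ => ENNReal.ofReal (nbPMF r p k))
      (fun k => ENNReal.ofReal_ne_top)
    rw [key] at h2
    simp only [ENNReal.toReal_one] at h2
    calc ∑' k, nbPMF r p k
        = ∑' k : ℕ, (ENNReal.ofReal (nbPMF r p k)).toReal :=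
          tsum_congr fun k => (ENNReal.toReal_ofReal (hnn k)).symm
      _ = 1 := h2.symm
  exact ht ▸ hs.hasSum

/-- If `r > 0` and `0 ≤ ε < p ≤ 1`, then
`d_TV(NB(r,p), NB(r,p-ε)) = (1/2)∑_k |P_{NB(r,p)}(k) - P_{NB(r,p-ε)}(k)| ≤ rε/(p-ε)`. -/
theorem stmt10 (r p ε : ℝ) (hr : 0 < r) (hε : 0 ≤ ε) (hεp : ε < p) (hp : p ≤ 1) :
    (1 / 2) * ∑' k : ℕ, |nbPMF r p k - nbPMF r (p - ε) k| ≤ r * ε / (p - ε) := by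
  set q : ℝ := p - ε with hq
  have hp0 : 0 < p := lt_of_le_of_lt hε hεp
  have hq0 : 0 < q := by simp [hq]; linarith
  have hq1 : q ≤ 1 := by simp [hq]; linarith
  have hqp : q ≤ p := by simp [hq]; linarith
  have ha : HasSum (fun k => nbPMF r p k) 1 := nb_hasSum hr hp0 hp
  have hb : HasSum (fun k => nbPMF r q k) 1 := nb_hasSum hr hq0 hq1
  have hm : HasSum (fun k => (q / p) ^ r * nbPMF r p k) ((q / p) ^ r * 1) := ha.mul_left _
  have hΓr : 0 < Real.Gamma r := Real.Gamma_pos_of_pos hr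
  -- pointwise bound
  have hkey : ∀ k : ℕ, |nbPMF r p k - nbPMF r q k|
      ≤ nbPMF r p k + nbPMF r q k - 2 * ((q / p) ^ r * nbPMF r p k) := by
    intro k
    have hC : 0 < Real.Gamma (r + k) / (Nat.factorial k * Real.Gamma r) := by
      have h1 : 0 < Real.Gamma (r + k) := Real.Gamma_pos_of_pos (by positivity)
      positivity
    have hmix : (q / p) ^ r * nbPMF r p k
        = Real.Gamma (r + k) / (Nat.factorial k * Real.Gamma r) * (1 - p) ^ k * q ^ r := by
      unfold nbPMF
      have : (q / p) ^ r * p ^ r = q ^ r := by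
        rw [← Real.mul_rpow (div_nonneg hq0.le hp0.le) hp0.le, div_mul_cancel₀ _ hp0.ne']
      rw [show (q / p) ^ r * (Real.Gamma (r + ↑k) / (↑(Nat.factorial k) * Real.Gamma r) * (1 - p) ^ k * p ^ r)
        = Real.Gamma (r + ↑k) / (↑(Nat.factorial k) * Real.Gamma r) * (1 - p) ^ k * ((q / p) ^ r * p ^ r) by ring, this]
    have h1 : (q / p) ^ r * nbPMF r p k ≤ nbPMF r p k := by
      rw [hmix]
      unfold nbPMF
      have hqr : q ^ r ≤ p ^ r := Real.rpow_le_rpow hq0.le hqp hr.le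
      have h1p : (0:ℝ) ≤ (1 - p) ^ k := by
        have : (0:ℝ) ≤ 1 - p := by linarith
        positivity
      exact mul_le_mul_of_nonneg_left hqr (by positivity)
    have h2 : (q / p) ^ r * nbPMF r p k ≤ nbPMF r q k := by
      rw [hmix]
      unfold nbPMF
      have hpow : (1 - p) ^ k ≤ (1 - q) ^ k := by
        apply pow_le_pow_left₀ (by linarith) (by linarith)
      have hqr : (0:ℝ) ≤ q ^ r := Real.rpow_nonneg hq0.le r
      exact mul_le_mul_of_nonneg_right (mul_le_mul_of_nonneg_left hpow hC.le) hqr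
    rw [abs_le]
    constructor <;> nlinarith
  have hg : HasSum (fun k => nbPMF r p k + nbPMF r q k - 2 * ((q / p) ^ r * nbPMF r p k))
      (1 + 1 - 2 * ((q / p) ^ r * 1)) := (ha.add hb).sub (hm.mul_left 2)
  have hsummable : Summable (fun k => |nbPMF r p k - nbPMF r q k|) :=
    Summable.of_nonneg_of_le (fun k => abs_nonneg _) hkey hg.summable
  have hts : ∑' k, |nbPMF r p k - nbPMF r q k| ≤ 1 + 1 - 2 * ((q / p) ^ r * 1) := by
    rw [← hg.tsum_eq]
    exact Summable.tsum_le_tsum hkey hsummable hg.summable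
  have hlog : 1 - (q / p) ^ r ≤ r * ε / q := by
    have ht0 : 0 < q / p := div_pos hq0 hp0
    have hrp : 0 < (q / p) ^ r := Real.rpow_pos_of_pos ht0 r
    have l1 : 1 - (q / p) ^ r ≤ -Real.log ((q / p) ^ r) := by
      have := Real.log_le_sub_one_of_pos hrp
      linarith
    have l2 : -Real.log ((q / p) ^ r) = r * Real.log (p / q) := by
      have h : Real.log (p / q) = -Real.log (q / p) := by
        rw [← Real.log_inv, inv_div]
      rw [Real.log_rpow ht0, h]
      ring
    have l3 : Real.log (p / q) ≤ p / q - 1 := Real.log_le_sub_one_of_pos (div_pos hp0 hq0)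
    have l4 : p / q - 1 = ε / q := by
      rw [hq]
      rw [div_sub_one (by linarith : p - ε ≠ 0)]; ring
    have l5 : r * Real.log (p / q) ≤ r * (ε / q) := by
      apply mul_le_mul_of_nonneg_left _ hr.le
      rw [← l4]; exact l3
    calc 1 - (q / p) ^ r ≤ r * Real.log (p / q) := by rw [← l2]; exact l1
      _ ≤ r * (ε / q) := l5
      _ = r * ε / q := by ring
  calc (1 / 2) * ∑' k : ℕ, |nbPMF r p k - nbPMF r q k|
      ≤ (1 / 2) * (1 + 1 - 2 * ((q / p) ^ r * 1)) := by
        apply mul_le_mul_of_nonneg_left hts (by norm_num)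
    _ = 1 - (q / p) ^ r := by ring
    _ ≤ r * ε / q := hlog
end

section
/- Let m ∈ ℕ, δ > -m, and let Z ∼ K(m,δ), the mixture NB(m+δ, U^{1/(2+δ/m)}) where U is uniform on (0,1). Then for every l ∈ ℤ≥0, P(Z=l) = (2+δ/m) · Γ(l+m+δ)Γ(m+2+δ+δ/m) / (Γ(m+δ)Γ(l+m+3+δ+δ/m)). -/
open MeasureTheory intervalIntegral Set

lemma beta_real (s : ℝ) (hs : 0 < s) (l : ℕ) :
    ∫ x in Set.Ioo (0:ℝ) 1, x ^ (s-1) * (1-x)^l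
      = Real.Gamma s * l.factorial / Real.Gamma (s + l + 1) := by
  have hI : ∫ x in Set.Ioo (0:ℝ) 1, x ^ (s-1) * (1-x)^l
      = ∫ x in (0:ℝ)..1, x ^ (s-1) * (1-x)^l := by
    rw [intervalIntegral.integral_of_le zero_le_one, ← integral_Ioc_eq_integral_Ioo]
  have hbeta : Complex.betaIntegral s (l+1)
      = ((∫ x in Set.Ioo (0:ℝ) 1, x ^ (s-1) * (1-x)^l : ℝ) : ℂ) := by
    rw [hI, ← intervalIntegral.integral_ofReal]
    unfold Complex.betaIntegral
    refine intervalIntegral.integral_congr fun x hx => ?_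
    rw [Set.uIcc_of_le zero_le_one] at hx
    push_cast
    rw [add_sub_cancel_right, Complex.cpow_natCast,
      show ((s:ℂ)-1) = ((s-1:ℝ):ℂ) by push_cast; ring, ← Complex.ofReal_cpow hx.1]
  have h1 : (0:ℝ) < (s:ℂ).re := by simpa using hs
  have h2 : (0:ℝ) < ((l:ℂ)+1).re := by simp; positivity
  have key := Complex.Gamma_mul_Gamma_eq_betaIntegral h1 h2
  rw [hbeta] at key
  have hl : Complex.Gamma ((l:ℂ)+1) = (l.factorial : ℂ) := by
    exact_mod_cast Complex.Gamma_nat_eq_factorial l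
  have hsum : ((s:ℂ) + ((l:ℂ)+1)) = ((s + l + 1 : ℝ) : ℂ) := by push_cast; ring
  rw [hl, hsum, Complex.Gamma_ofReal, Complex.Gamma_ofReal] at key
  have hpos : (0:ℝ) < Real.Gamma (s + l + 1) := Real.Gamma_pos_of_pos (by positivity)
  have key2 : Real.Gamma s * l.factorial
      = Real.Gamma (s + l + 1) * ∫ x in Set.Ioo (0:ℝ) 1, x ^ (s-1) * (1-x)^l := by
    exact_mod_cast key
  field_simp [hpos.ne']
  linarith [key2]

/-- The point probabilities of the mixture `K(m,δ) = NB(m+δ, U^{1/(2+δ/m)})`, `U` uniform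
on `(0,1)`: for every `l`,
`P(Z=l) = (2+δ/m) Γ(l+m+δ) Γ(m+2+δ+δ/m) / (Γ(m+δ) Γ(l+m+3+δ+δ/m))`. -/
theorem stmt12 (m : ℕ) (hm : 1 ≤ m) (δ : ℝ) (hδ : -(m : ℝ) < δ) (l : ℕ) :
    (∫ u in Set.Ioo (0 : ℝ) 1,
        Real.Gamma ((m : ℝ) + δ + l) / (Nat.factorial l * Real.Gamma ((m : ℝ) + δ))
          * (1 - u ^ (1 / (2 + δ / (m : ℝ)))) ^ l
          * u ^ (((m : ℝ) + δ) / (2 + δ / (m : ℝ))))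
      = (2 + δ / (m : ℝ))
          * (Real.Gamma ((l : ℝ) + m + δ) * Real.Gamma ((m : ℝ) + 2 + δ + δ / (m : ℝ)))
          / (Real.Gamma ((m : ℝ) + δ) * Real.Gamma ((l : ℝ) + m + 3 + δ + δ / (m : ℝ))) := by
  have hm0 : (0:ℝ) < m := by exact_mod_cast hm
  set c : ℝ := 2 + δ / m with hc_def
  set a : ℝ := (m:ℝ) + δ with ha_def
  have ha : 0 < a := by rw [ha_def]; linarith
  have hdm : -1 < δ / m := by
    rw [neg_lt, ← neg_div]
    exact (div_lt_one hm0).mpr (by linarith)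
  have hc1 : (1:ℝ) < c := by rw [hc_def]; linarith
  have hc0 : (0:ℝ) < c := by linarith
  set C : ℝ := Real.Gamma ((m : ℝ) + δ + l) / (Nat.factorial l * Real.Gamma ((m : ℝ) + δ))
    with hC_def
  set g : ℝ → ℝ := fun u => C * (1 - u ^ (1/c)) ^ l * u ^ (a/c) with hg_def
  have hg_cont : Continuous g := by
    apply Continuous.mul
    · apply Continuous.mul continuous_const
      exact (continuous_const.sub (Real.continuous_rpow_const (by positivity))).pow l
    · exact Real.continuous_rpow_const (by positivity)
  have hsub : (∫ u in (0:ℝ)..1, g u)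
      = ∫ t in (0:ℝ)..1, (c * t ^ (c-1)) • g (t ^ c) := by
    have := intervalIntegral.integral_comp_smul_deriv
      (f := fun t : ℝ => t ^ c) (f' := fun t => c * t ^ (c-1)) (g := g)
      (a := 0) (b := 1)
      (fun x _ => Real.hasDerivAt_rpow_const (Or.inr hc1.le))
      (continuous_const.mul (Real.continuous_rpow_const (by linarith))).continuousOn
      hg_cont
    simp only [Function.comp] at this
    rw [Real.zero_rpow hc0.ne', Real.one_rpow] at this
    exact this.symm
  have hIoo : ∀ t ∈ Set.Ioo (0:ℝ) 1,
      (c * t ^ (c-1)) • g (t ^ c) = (C * c) * (t ^ (a + c - 1) * (1 - t) ^ l) := by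
    intro t ht
    have ht0 : (0:ℝ) ≤ t := ht.1.le
    have h1 : (t ^ c) ^ (1/c) = t := by
      rw [← Real.rpow_mul ht0, mul_one_div, div_self hc0.ne', Real.rpow_one]
    have h2 : (t ^ c) ^ (a/c) = t ^ a := by
      rw [← Real.rpow_mul ht0, mul_div_cancel₀ a hc0.ne']
    have h3 : t ^ (c-1) * t ^ a = t ^ (a + c - 1) := by
      rw [← Real.rpow_add ht.1, show c - 1 + a = a + c - 1 by ring]
    simp only [smul_eq_mul, hg_def, h1, h2]
    calc c * t ^ (c-1) * (C * (1-t)^l * t^a)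
        = (C * c) * ((t ^ (c-1) * t ^ a) * (1-t)^l) := by ring
      _ = (C * c) * (t ^ (a + c - 1) * (1-t)^l) := by rw [h3]
  have hbeta := beta_real (a + c) (by linarith) l
  calc (∫ u in Set.Ioo (0:ℝ) 1, C * (1 - u ^ (1/c)) ^ l * u ^ (a/c))
      = ∫ u in (0:ℝ)..1, g u := by
        rw [intervalIntegral.integral_of_le zero_le_one, ← integral_Ioc_eq_integral_Ioo]
    _ = ∫ t in (0:ℝ)..1, (c * t ^ (c-1)) • g (t ^ c) := hsub
    _ = ∫ t in Set.Ioo (0:ℝ) 1, (C * c) * (t ^ (a + c - 1) * (1 - t) ^ l) := by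
        rw [intervalIntegral.integral_of_le zero_le_one, integral_Ioc_eq_integral_Ioo]
        exact setIntegral_congr_fun measurableSet_Ioo hIoo
    _ = (C * c) * ∫ t in Set.Ioo (0:ℝ) 1, t ^ (a + c - 1) * (1 - t) ^ l :=
        MeasureTheory.integral_const_mul _ _
    _ = (C * c) * (Real.Gamma (a+c) * l.factorial / Real.Gamma (a + c + l + 1)) := by
        rw [hbeta]
    _ = (2 + δ / (m : ℝ))
          * (Real.Gamma ((l : ℝ) + m + δ) * Real.Gamma ((m : ℝ) + 2 + δ + δ / (m : ℝ)))
          / (Real.Gamma ((m : ℝ) + δ) * Real.Gamma ((l : ℝ) + m + 3 + δ + δ / (m : ℝ))) := by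
        have e1 : Real.Gamma ((m:ℝ) + δ + l) = Real.Gamma ((l:ℝ) + m + δ) := by
          ring_nf
        have e2 : Real.Gamma (a + c) = Real.Gamma ((m : ℝ) + 2 + δ + δ / (m : ℝ)) := by
          rw [ha_def, hc_def]; ring_nf
        have e3 : Real.Gamma (a + c + l + 1)
            = Real.Gamma ((l : ℝ) + m + 3 + δ + δ / (m : ℝ)) := by
          rw [ha_def, hc_def]; ring_nf
        have hΓ3 : Real.Gamma ((m:ℝ) + δ) ≠ 0 := (Real.Gamma_pos_of_pos (by linarith)).ne'
        have hΓ4 : Real.Gamma ((l : ℝ) + m + 3 + δ + δ / (m : ℝ)) ≠ 0 := by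
          refine (Real.Gamma_pos_of_pos ?_).ne'
          have : (0:ℝ) ≤ l := Nat.cast_nonneg l
          linarith
        have hfac : (l.factorial : ℝ) ≠ 0 := by positivity
        rw [hC_def, e1, e2, e3, hc_def]
        generalize Real.Gamma ((l:ℝ) + m + δ) = G1
        generalize Real.Gamma ((m:ℝ) + 2 + δ + δ / m) = G2
        generalize hG3 : Real.Gamma ((m:ℝ) + δ) = G3 at hΓ3
        generalize hG4 : Real.Gamma ((l:ℝ) + m + 3 + δ + δ / m) = G4 at hΓ4
        field_simp
end

section
/- Let m ∈ ℕ, δ > -m, c = (2+δ/m)Γ(m+2+δ+δ/m)/Γ(m+δ), and Z ∼ K(m,δ). Then P(Z=k) · k^{3+δ/m} → c as k → ∞; i.e. K(m,δ) has power law tails with exponent 3+δ/m. -/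
open Filter Real Finset Topology Nat

lemma gamma_nat_add {a : ℝ} (ha : 0 < a) (k : ℕ) :
    Real.Gamma ((k : ℝ) + a) = (∏ j ∈ Finset.range k, (a + j)) * Real.Gamma a := by
  induction k with
  | zero => simp
  | succ n ih =>
    have h1 : ((n + 1 : ℕ) : ℝ) + a = (a + n) + 1 := by push_cast; ring
    have h2 : (0:ℝ) < a + n := by positivity
    rw [h1, Real.Gamma_add_one h2.ne', Finset.prod_range_succ,
      show (a:ℝ) + n = (n:ℝ) + a by ring, ih]
    ring

lemma key_s13 {a s : ℝ} (ha : 0 < a) (hs : 0 < s) :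
    Tendsto (fun k : ℕ => Real.Gamma ((k : ℝ) + a) / Real.Gamma ((k : ℝ) + a + s)
      * (k : ℝ) ^ s) atTop (𝓝 1) := by
  have hΓa : Real.Gamma a ≠ 0 := (Real.Gamma_pos_of_pos ha).ne'
  have hΓas : Real.Gamma (a + s) ≠ 0 := (Real.Gamma_pos_of_pos (by linarith)).ne'
  have h1 := Real.GammaSeq_tendsto_Gamma (a + s)
  have h2 := Real.GammaSeq_tendsto_Gamma a
  have hA : Tendsto (fun k : ℕ => a + (k : ℝ)) atTop atTop :=
    tendsto_atTop_add_const_left _ _ tendsto_natCast_atTop_atTop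
  have h0 : Tendsto (fun k : ℕ => s / (a + (k : ℝ))) atTop (𝓝 0) :=
    Tendsto.div_atTop tendsto_const_nhds hA
  have h3 : Tendsto (fun k : ℕ => (a + s + (k : ℝ)) / (a + (k : ℝ))) atTop (𝓝 1) := by
    have : Tendsto (fun k : ℕ => 1 + s / (a + (k : ℝ))) atTop (𝓝 (1 + 0)) :=
      tendsto_const_nhds.add h0
    rw [add_zero] at this
    refine this.congr' ?_
    filter_upwards [eventually_ge_atTop 1] with k hk
    have hak : (0:ℝ) < a + k := by positivity
    field_simp
    ring
  have hmain : Tendsto (fun k : ℕ => Real.Gamma a / Real.Gamma (a + s)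
      * (Real.GammaSeq (a + s) k / Real.GammaSeq a k)
      * ((a + s + (k : ℝ)) / (a + (k : ℝ)))) atTop
      (𝓝 (Real.Gamma a / Real.Gamma (a + s) * (Real.Gamma (a + s) / Real.Gamma a) * 1)) :=
    ((tendsto_const_nhds.mul (h1.div h2 hΓa)).mul h3)
  have heq : Real.Gamma a / Real.Gamma (a + s) * (Real.Gamma (a + s) / Real.Gamma a) * 1 = 1 := by
    field_simp
  rw [heq] at hmain
  refine hmain.congr' ?_
  filter_upwards [eventually_ge_atTop 1] with k hk
  have hk0 : (0:ℝ) < (k : ℝ) := by exact_mod_cast hk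
  have hPk : (0:ℝ) < ∏ j ∈ Finset.range k, (a + j) := by
    apply Finset.prod_pos; intro j _; positivity
  have hQk : (0:ℝ) < ∏ j ∈ Finset.range k, (a + s + j) := by
    apply Finset.prod_pos; intro j _; positivity
  have hGa : Real.Gamma ((k : ℝ) + a) = (∏ j ∈ Finset.range k, (a + j)) * Real.Gamma a :=
    gamma_nat_add ha k
  have hGas : Real.Gamma ((k : ℝ) + a + s)
      = (∏ j ∈ Finset.range k, (a + s + j)) * Real.Gamma (a + s) := by
    rw [show (k:ℝ) + a + s = (k:ℝ) + (a + s) by ring]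
    exact gamma_nat_add (by linarith) k
  have hseqa : Real.GammaSeq a k
      = (k : ℝ) ^ a * (k.factorial : ℝ) / ((∏ j ∈ Finset.range k, (a + j)) * (a + k)) := by
    rw [Real.GammaSeq, Finset.prod_range_succ]
  have hseqas : Real.GammaSeq (a + s) k
      = (k : ℝ) ^ (a + s) * (k.factorial : ℝ) / ((∏ j ∈ Finset.range k, (a + s + j)) * (a + s + k)) := by
    rw [Real.GammaSeq, Finset.prod_range_succ]
  have hrpow : (k : ℝ) ^ (a + s) = (k : ℝ) ^ a * (k : ℝ) ^ s := Real.rpow_add hk0 a s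
  have hka : (0:ℝ) < (k : ℝ) ^ a := Real.rpow_pos_of_pos hk0 a
  have hks : (0:ℝ) < (k : ℝ) ^ s := Real.rpow_pos_of_pos hk0 s
  have hf : (0:ℝ) < (k.factorial : ℝ) := by exact_mod_cast k.factorial_pos
  have hak : (0:ℝ) < a + k := by positivity
  have hask : (0:ℝ) < a + s + k := by positivity
  rw [hGa, hGas, hseqa, hseqas, hrpow]
  field_simp

/-- `K(m,δ)` has power law tails with exponent `3 + δ/m`:
`P(Z=k) k^{3+δ/m} → c = (2+δ/m)Γ(m+2+δ+δ/m)/Γ(m+δ)` as `k → ∞`. -/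
theorem stmt13 (m : ℕ) (hm : 1 ≤ m) (δ : ℝ) (hδ : -(m : ℝ) < δ)
    (c : ℝ)
    (hc : c = (2 + δ / (m : ℝ)) * Real.Gamma ((m : ℝ) + 2 + δ + δ / (m : ℝ))
      / Real.Gamma ((m : ℝ) + δ))
    (P : ℕ → ℝ)
    (hP : ∀ l : ℕ, P l = (2 + δ / (m : ℝ))
      * (Real.Gamma ((l : ℝ) + m + δ) * Real.Gamma ((m : ℝ) + 2 + δ + δ / (m : ℝ)))
      / (Real.Gamma ((m : ℝ) + δ) * Real.Gamma ((l : ℝ) + m + 3 + δ + δ / (m : ℝ)))) :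
    Filter.Tendsto (fun k : ℕ => P k * (k : ℝ) ^ (3 + δ / (m : ℝ)))
      Filter.atTop (nhds c) := by
  have hm0 : (0:ℝ) < (m : ℝ) := by exact_mod_cast hm
  have ha : (0:ℝ) < (m : ℝ) + δ := by linarith
  have hdm : -1 < δ / (m : ℝ) := by
    rw [neg_lt, ← neg_div]
    exact (div_lt_one hm0).mpr (by linarith)
  have hs : (0:ℝ) < 3 + δ / (m : ℝ) := by linarith
  have hk := key_s13 ha hs
  have : Tendsto (fun k : ℕ => c * (Real.Gamma ((k : ℝ) + ((m : ℝ) + δ))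
      / Real.Gamma ((k : ℝ) + ((m : ℝ) + δ) + (3 + δ / (m : ℝ)))
      * (k : ℝ) ^ (3 + δ / (m : ℝ)))) atTop (𝓝 (c * 1)) :=
    tendsto_const_nhds.mul hk
  rw [mul_one] at this
  refine this.congr fun k => ?_
  rw [hP k, hc]
  rw [show (k:ℝ) + ((m:ℝ) + δ) = (k:ℝ) + m + δ by ring,
    show (k:ℝ) + m + δ + (3 + δ / (m : ℝ)) = (k:ℝ) + m + 3 + δ + δ / m by ring]
  ring
end

section
/- For fixed a, b > 0, the ratio Γ(z+a)/Γ(z+b) = z^{a-b} + O(z^{a-b-1}) as z → ∞ (z real); in particular, z^{b-a} Γ(z+a)/Γ(z+b) → 1 and the difference z^{b-a}Γ(z+a)/Γ(z+b) - 1 is O(1/z). -/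
open Filter Asymptotics Real

-- Wendel upper bound
lemma wendel_upper {s x : ℝ} (hs0 : 0 ≤ s) (hs1 : s ≤ 1) (hx : 0 < x) :
    Real.Gamma (x + s) ≤ x ^ s * Real.Gamma x := by
  have hΓx := Real.Gamma_pos_of_pos hx
  rcases eq_or_lt_of_le hs0 with rfl | hs0
  · simp
  rcases eq_or_lt_of_le hs1 with rfl | hs1
  · rw [Real.Gamma_add_one hx.ne', Real.rpow_one]
  have h := Real.Gamma_mul_add_mul_le_rpow_Gamma_mul_rpow_Gamma (s := x) (t := x + 1)
    (a := 1 - s) (b := s) hx (by linarith) (by linarith) hs0 (by ring)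
  have harg : (1 - s) * x + s * (x + 1) = x + s := by ring
  rw [harg] at h
  calc Real.Gamma (x + s) ≤ Real.Gamma x ^ (1 - s) * Real.Gamma (x + 1) ^ s := h
    _ = x ^ s * Real.Gamma x := by
        rw [Real.Gamma_add_one hx.ne', Real.mul_rpow hx.le hΓx.le,
          ← mul_assoc, mul_comm (Real.Gamma x ^ (1-s)), mul_assoc,
          ← Real.rpow_add hΓx]
        norm_num

lemma wendel_lower {s x : ℝ} (hs0 : 0 ≤ s) (hs1 : s ≤ 1) (hx : 0 < x) :
    x * Real.Gamma x ≤ (x + s) ^ (1 - s) * Real.Gamma (x + s) := by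
  have hΓx := Real.Gamma_pos_of_pos hx
  have hxs : 0 < x + s := by linarith
  have hΓxs := Real.Gamma_pos_of_pos hxs
  rcases eq_or_lt_of_le hs0 with rfl | hs0
  · simp [Real.rpow_one]
  rcases eq_or_lt_of_le hs1 with rfl | hs1
  · rw [← Real.Gamma_add_one hx.ne']
    simp
  have h := Real.Gamma_mul_add_mul_le_rpow_Gamma_mul_rpow_Gamma (s := x + s) (t := x + s + 1)
    (a := s) (b := 1 - s) hxs (by linarith) hs0 (by linarith) (by ring)
  have harg : s * (x + s) + (1 - s) * (x + s + 1) = x + 1 := by ring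
  rw [harg, Real.Gamma_add_one hx.ne', Real.Gamma_add_one hxs.ne'] at h
  calc x * Real.Gamma x ≤ Real.Gamma (x + s) ^ s * ((x + s) * Real.Gamma (x + s)) ^ (1 - s) := h
    _ = (x + s) ^ (1 - s) * Real.Gamma (x + s) := by
        rw [Real.mul_rpow hxs.le hΓxs.le, ← mul_assoc, mul_comm (Real.Gamma (x+s) ^ s),
          mul_assoc, ← Real.rpow_add hΓxs]
        norm_num

-- key bound for s in [0,1]
lemma key_bound {s x : ℝ} (hs0 : 0 ≤ s) (hs1 : s ≤ 1) (hx : 1 ≤ x) :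
    |Real.Gamma (x + s) / (x ^ s * Real.Gamma x) - 1| ≤ 1 / x := by
  have hx0 : (0:ℝ) < x := by linarith
  have hΓx := Real.Gamma_pos_of_pos hx0
  have hxs : 0 < x + s := by linarith
  have hΓxs := Real.Gamma_pos_of_pos hxs
  have hxp : 0 < x ^ s := Real.rpow_pos_of_pos hx0 s
  have hden : 0 < x ^ s * Real.Gamma x := by positivity
  have hub : Real.Gamma (x + s) / (x ^ s * Real.Gamma x) ≤ 1 := by
    rw [div_le_one hden]
    exact wendel_upper hs0 hs1 hx0
  have hlb : 1 - 1 / x ≤ Real.Gamma (x + s) / (x ^ s * Real.Gamma x) := by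
    have hwl := wendel_lower hs0 hs1 hx0
    -- Γ(x+s) ≥ x Γ x / (x+s)^{1-s}
    have hpow : 0 < (x + s) ^ (1 - s) := Real.rpow_pos_of_pos hxs _
    have h1 : x * Real.Gamma x / ((x + s) ^ (1 - s) * (x ^ s * Real.Gamma x))
        ≤ Real.Gamma (x + s) / (x ^ s * Real.Gamma x) := by
      rw [div_le_div_iff₀ (by positivity) hden]
      calc x * Real.Gamma x * (x ^ s * Real.Gamma x)
          ≤ (x + s) ^ (1 - s) * Real.Gamma (x + s) * (x ^ s * Real.Gamma x) := by
            exact mul_le_mul_of_nonneg_right hwl (by positivity)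
        _ = Real.Gamma (x + s) * ((x + s) ^ (1 - s) * (x ^ s * Real.Gamma x)) := by ring
    refine le_trans ?_ h1
    -- x / ((x+s)^{1-s} x^s) ≥ 1 - 1/x
    have hB : (x + s) ^ (1 - s) ≤ (1 + (1 - s) * (s / x)) * x ^ (1 - s) := by
      have : x + s = (1 + s / x) * x := by field_simp
      rw [this, Real.mul_rpow (by positivity) hx0.le]
      have hbern : (1 + s / x) ^ (1 - s) ≤ 1 + (1 - s) * (s / x) :=
        rpow_one_add_le_one_add_mul_self (by nlinarith [div_nonneg hs0 hx0.le]) (by linarith) (by linarith)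
      exact mul_le_mul_of_nonneg_right hbern (Real.rpow_pos_of_pos hx0 _).le
    have hxsplit : x ^ (1 - s) * x ^ s = x := by
      rw [← Real.rpow_add hx0]; norm_num
    rw [le_div_iff₀ (by positivity : (0:ℝ) < (x+s)^(1-s) * (x^s * Real.Gamma x))]
    -- goal : (1 - 1/x) * ((x+s)^{1-s} * (x^s * Γ x)) ≤ x * Γ x
    have h2 : (1 - 1/x) * ((x + s) ^ (1 - s) * (x ^ s * Real.Gamma x))
        ≤ (1 - 1/x) * ((1 + (1 - s) * (s / x)) * x ^ (1 - s) * (x ^ s * Real.Gamma x)) := by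
      have h1x : (0:ℝ) ≤ 1 - 1/x := by
        have : 1 / x ≤ 1 := by rw [div_le_one hx0]; exact hx
        linarith
      refine mul_le_mul_of_nonneg_left ?_ h1x
      have := mul_le_mul_of_nonneg_right hB (le_of_lt (by positivity : (0:ℝ) < x ^ s * Real.Gamma x))
      linarith [this]
    refine h2.trans ?_
    have h3 : (1 + (1 - s) * (s / x)) * x ^ (1 - s) * (x ^ s * Real.Gamma x)
        = (1 + (1 - s) * (s / x)) * x * Real.Gamma x := by
      rw [mul_assoc ((1 + (1 - s) * (s / x))), ← mul_assoc (x ^ (1-s)), hxsplit]; ring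
    rw [h3]
    have hineq : (1 - 1/x) * ((1 + (1 - s) * (s / x)) * x) ≤ x := by
      have hxne : x ≠ 0 := hx0.ne'
      field_simp
      nlinarith [sq_nonneg s, sq_nonneg (1 - s), hx0, sq_nonneg x]
    nlinarith [hineq, hΓx]
  rw [abs_le]
  constructor
  · linarith
  · have : (0:ℝ) < 1/x := by positivity
    linarith

lemma F_isBigO : ∀ c : ℝ, 0 < c →
    (fun x : ℝ => Real.Gamma (x + c) / (x ^ c * Real.Gamma x) - 1) =O[atTop] fun x : ℝ => 1 / x := by
  suffices H : ∀ n : ℕ, ∀ c : ℝ, 0 < c → c ≤ n + 1 →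
      (fun x : ℝ => Real.Gamma (x + c) / (x ^ c * Real.Gamma x) - 1) =O[atTop] fun x : ℝ => 1 / x by
    intro c hc
    exact H ⌈c⌉₊ c hc (le_trans (Nat.le_ceil c) (by push_cast; linarith))
  intro n
  induction n with
  | zero =>
    intro c hc hc1
    rw [isBigO_iff]
    refine ⟨1, ?_⟩
    filter_upwards [eventually_ge_atTop (1:ℝ)] with x hx
    have := key_bound hc.le (by norm_num at hc1 ⊢; linarith) hx
    rw [Real.norm_eq_abs, Real.norm_eq_abs, one_mul]
    exact this.trans (le_abs_self _)
  | succ n ih =>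
    intro c hc hc1
    by_cases hcn : c ≤ n + 1
    · exact ih c hc hcn
    push_neg at hcn
    have hc1' : 0 < c - 1 := by
      have h1 : (1:ℝ) ≤ (n:ℝ) + 1 := by have := Nat.cast_nonneg (α := ℝ) n; linarith
      linarith
    have ihc := ih (c - 1) hc1' (by push_cast at hc1 ⊢; linarith)
    have heq : (fun x : ℝ => Real.Gamma (x + c) / (x ^ c * Real.Gamma x) - 1) =ᶠ[atTop]
        fun x => (1 + (c-1)/x) * (Real.Gamma (x + (c-1)) / (x ^ (c-1) * Real.Gamma x) - 1)
          + (c-1)/x := by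
      filter_upwards [eventually_gt_atTop (0:ℝ)] with x hx
      have hΓx := Real.Gamma_pos_of_pos hx
      have hΓ : Real.Gamma (x + c) = (x + (c - 1)) * Real.Gamma (x + (c-1)) := by
        have h2 : x + c = (x + (c-1)) + 1 := by ring
        rw [h2, Real.Gamma_add_one (by linarith : (0:ℝ) < x + (c-1)).ne']
      have hpow : x ^ c = x ^ (c - 1) * x := by
        rw [← Real.rpow_add_one hx.ne']
        ring_nf
      have hp : (0:ℝ) < x ^ (c-1) := Real.rpow_pos_of_pos hx _
      rw [hΓ, hpow]
      field_simp
      ring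
    have hmul : (fun x : ℝ => (1 + (c-1)/x)
          * (Real.Gamma (x + (c-1)) / (x ^ (c-1) * Real.Gamma x) - 1))
        =O[atTop] fun x : ℝ => 1 / x := by
      have ht : Tendsto (fun x : ℝ => 1 + (c-1)/x) atTop (nhds (1 + 0)) :=
        tendsto_const_nhds.add (Tendsto.div_atTop tendsto_const_nhds tendsto_id)
      simpa using (ht.isBigO_one ℝ).mul ihc
    have hadd : (fun x : ℝ => (c-1)/x) =O[atTop] fun x : ℝ => 1 / x := by
      simpa [mul_one_div, div_eq_mul_inv] using (isBigO_refl (fun x:ℝ => 1/x) atTop).const_mul_left (c-1)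
    exact ((hmul.add hadd).congr' heq.symm EventuallyEq.rfl)


/-- For fixed `a, b > 0`, `Γ(z+a)/Γ(z+b) = z^{a-b} + O(z^{a-b-1})` as `z → ∞`;
in particular `z^{b-a}Γ(z+a)/Γ(z+b) → 1` and `z^{b-a}Γ(z+a)/Γ(z+b) - 1 = O(1/z)`. -/
theorem stmt14 (a b : ℝ) (ha : 0 < a) (hb : 0 < b) :
    ((fun z : ℝ => Real.Gamma (z + a) / Real.Gamma (z + b) - z ^ (a - b))
        =O[atTop] fun z : ℝ => z ^ (a - b - 1))
    ∧ Tendsto (fun z : ℝ => z ^ (b - a) * Real.Gamma (z + a) / Real.Gamma (z + b))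
        atTop (nhds 1)
    ∧ ((fun z : ℝ => z ^ (b - a) * Real.Gamma (z + a) / Real.Gamma (z + b) - 1)
        =O[atTop] fun z : ℝ => 1 / z) := by
  have hFa := F_isBigO a ha
  have hFb := F_isBigO b hb
  have h0 : Tendsto (fun x : ℝ => 1/x) atTop (nhds 0) :=
    Tendsto.div_atTop tendsto_const_nhds tendsto_id
  have htFb : Tendsto (fun x : ℝ => Real.Gamma (x + b) / (x ^ b * Real.Gamma x))
      atTop (nhds 1) := by
    have h1 := hFb.trans_tendsto h0
    have h2 := h1.add_const 1
    simpa using h2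
  have hGeq : (fun z : ℝ => Real.Gamma (z + a) / (z ^ a * Real.Gamma z) / (Real.Gamma (z + b) / (z ^ b * Real.Gamma z)))
      =ᶠ[atTop] fun z : ℝ => z ^ (b - a) * Real.Gamma (z + a) / Real.Gamma (z + b) := by
    filter_upwards [eventually_gt_atTop (0:ℝ)] with z hz
    have hΓz := Real.Gamma_pos_of_pos hz
    have hΓa := Real.Gamma_pos_of_pos (by linarith : (0:ℝ) < z + a)
    have hΓb := Real.Gamma_pos_of_pos (by linarith : (0:ℝ) < z + b)
    have hza : (0:ℝ) < z ^ a := Real.rpow_pos_of_pos hz a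
    have hzb : (0:ℝ) < z ^ b := Real.rpow_pos_of_pos hz b
    rw [Real.rpow_sub hz]
    field_simp
  have hG : (fun z : ℝ => z ^ (b - a) * Real.Gamma (z + a) / Real.Gamma (z + b) - 1)
      =O[atTop] fun z : ℝ => 1 / z := by
    have hinv : Tendsto (fun z : ℝ => (Real.Gamma (z + b) / (z ^ b * Real.Gamma z))⁻¹)
        atTop (nhds 1) := by simpa using htFb.inv₀ one_ne_zero
    have hmul : (fun z : ℝ => ((Real.Gamma (z + a) / (z ^ a * Real.Gamma z) - 1)
          - (Real.Gamma (z + b) / (z ^ b * Real.Gamma z) - 1))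
          * (Real.Gamma (z + b) / (z ^ b * Real.Gamma z))⁻¹)
        =O[atTop] fun z : ℝ => 1 / z := by
      simpa using (hFa.sub hFb).mul (hinv.isBigO_one ℝ)
    refine hmul.congr' ?_ EventuallyEq.rfl
    filter_upwards [eventually_gt_atTop (0:ℝ), hGeq] with z hz hge
    have hΓz := Real.Gamma_pos_of_pos hz
    have hΓb := Real.Gamma_pos_of_pos (by linarith : (0:ℝ) < z + b)
    have hzb : (0:ℝ) < z ^ b := Real.rpow_pos_of_pos hz b
    have hFbz : (0:ℝ) < Real.Gamma (z + b) / (z ^ b * Real.Gamma z) := by positivity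
    rw [← hge]
    field_simp
    ring
  refine ⟨?_, ?_, hG⟩
  · have heq1 : (fun z : ℝ => Real.Gamma (z + a) / Real.Gamma (z + b) - z ^ (a - b))
        =ᶠ[atTop] fun z : ℝ =>
          z ^ (a - b) * (z ^ (b - a) * Real.Gamma (z + a) / Real.Gamma (z + b) - 1) := by
      filter_upwards [eventually_gt_atTop (0:ℝ)] with z hz
      have h1 : z ^ (a - b) * z ^ (b - a) = 1 := by
        rw [← Real.rpow_add hz]; simp
      rw [mul_sub, mul_one, mul_div_assoc', ← mul_assoc, h1, one_mul]
    have hO1 : (fun z : ℝ => z ^ (a - b) * (1 / z)) =ᶠ[atTop] fun z : ℝ => z ^ (a - b - 1) := by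
      filter_upwards [eventually_gt_atTop (0:ℝ)] with z hz
      rw [Real.rpow_sub hz (a-b) 1, Real.rpow_one, mul_one_div]
    exact ((isBigO_refl (fun z : ℝ => z ^ (a - b)) atTop).mul hG).congr' heq1.symm hO1
  · have h1 := hG.trans_tendsto h0
    have h2 := h1.add_const 1
    simpa using h2
end

section
/- Let m ∈ ℕ, δ > -m, and let μ_{n,i} = E[W_{n,i}] be the expected in-degree of vertex i in G_n^{m,δ} for n ≥ i ≥ 1. Then there is a constant C depending only on m and δ such that |μ_{n,i}/(m+δ) + 1 - (n/i)^{1/(2+δ/m)}| ≤ C (n/i)^{1/(2+δ/m)} / i. -/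
open Real

lemma gamma_combo {u v θ : ℝ} (hu : 0 < u) (hv : 0 < v) (h0 : 0 ≤ θ) (h1 : θ ≤ 1) :
    Real.Gamma (θ * u + (1 - θ) * v) ≤ Real.Gamma u ^ θ * Real.Gamma v ^ (1 - θ) := by
  have h2 : (0:ℝ) ≤ 1 - θ := by linarith
  have h3 : θ + (1 - θ) = 1 := by ring
  have hmem : θ * u + (1 - θ) * v ∈ Set.Ioi (0:ℝ) := by
    rcases eq_or_lt_of_le h0 with h | h
    · simp only [Set.mem_Ioi]; nlinarith
    · simp only [Set.mem_Ioi]; nlinarith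
  have := Real.convexOn_log_Gamma.2 (Set.mem_Ioi.mpr hu) (Set.mem_Ioi.mpr hv) h0 h2 h3
  simp only [smul_eq_mul, Function.comp_apply] at this
  have hGu := Real.Gamma_pos_of_pos hu
  have hGv := Real.Gamma_pos_of_pos hv
  have hGc := Real.Gamma_pos_of_pos (Set.mem_Ioi.mp hmem)
  calc Real.Gamma (θ * u + (1 - θ) * v)
      = Real.exp (Real.log (Real.Gamma (θ * u + (1 - θ) * v))) := (Real.exp_log hGc).symm
    _ ≤ Real.exp (θ * Real.log (Real.Gamma u) + (1 - θ) * Real.log (Real.Gamma v)) :=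
        Real.exp_le_exp.mpr this
    _ = Real.Gamma u ^ θ * Real.Gamma v ^ (1 - θ) := by
        rw [Real.exp_add, Real.rpow_def_of_pos hGu, Real.rpow_def_of_pos hGv,
          mul_comm (Real.log (Real.Gamma u)), mul_comm (Real.log (Real.Gamma v))]

lemma gautschi_up {a x : ℝ} (ha0 : 0 < a) (ha1 : a < 1) (hx : 0 < x) :
    Real.Gamma (x + 1) ≤ (x + a) ^ (1 - a) * Real.Gamma (x + a) := by
  have hxa : 0 < x + a := by linarith
  have hxa1 : 0 < x + a + 1 := by linarith
  have h := gamma_combo hxa hxa1 ha0.le ha1.le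
  have harg : a * (x + a) + (1 - a) * (x + a + 1) = x + 1 := by ring
  rw [harg] at h
  have hG1 : Real.Gamma (x + a + 1) = (x + a) * Real.Gamma (x + a) := Real.Gamma_add_one hxa.ne'
  rw [hG1] at h
  have hG : (0:ℝ) < Real.Gamma (x + a) := Real.Gamma_pos_of_pos hxa
  calc Real.Gamma (x + 1) ≤ Real.Gamma (x + a) ^ a * ((x + a) * Real.Gamma (x + a)) ^ (1 - a) := h
    _ = (x + a) ^ (1 - a) * Real.Gamma (x + a) := by
        rw [Real.mul_rpow hxa.le hG.le, mul_left_comm, ← Real.rpow_add hG]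
        norm_num

lemma gautschi_low {a x : ℝ} (ha0 : 0 < a) (ha1 : a < 1) (hx : 0 < x) :
    x ^ (1 - a) * Real.Gamma (x + a) ≤ Real.Gamma (x + 1) := by
  have hx1 : 0 < x + 1 := by linarith
  have h := gamma_combo hx hx1 (by linarith : (0:ℝ) ≤ 1 - a) (by linarith : (1:ℝ) - a ≤ 1)
  have harg : (1 - a) * x + (1 - (1 - a)) * (x + 1) = x + a := by ring
  rw [harg, show (1 : ℝ) - (1 - a) = a by ring] at h
  have hGx : Real.Gamma (x + 1) = x * Real.Gamma x := Real.Gamma_add_one hx.ne'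
  have hG : (0:ℝ) < Real.Gamma x := Real.Gamma_pos_of_pos hx
  have hG1 : (0:ℝ) < Real.Gamma (x + 1) := Real.Gamma_pos_of_pos hx1
  -- Γ(x+a) ≤ Γ(x)^{1-a} Γ(x+1)^a = (Γ(x+1)/x)^{1-a} Γ(x+1)^a = Γ(x+1) x^{a-1}
  have hGx' : Real.Gamma x = Real.Gamma (x + 1) / x := by rw [hGx]; field_simp
  rw [hGx'] at h
  have key : (Real.Gamma (x+1) / x) ^ (1-a) * Real.Gamma (x+1) ^ a
      = Real.Gamma (x+1) / x ^ (1-a) := by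
    rw [Real.div_rpow hG1.le hx.le]
    rw [div_mul_eq_mul_div, ← Real.rpow_add hG1]
    norm_num
  rw [key] at h
  have hxp : (0:ℝ) < x ^ (1 - a) := Real.rpow_pos_of_pos hx _
  have h2 := mul_le_mul_of_nonneg_left h hxp.le
  calc x ^ (1 - a) * Real.Gamma (x + a) ≤ x ^ (1 - a) * (Real.Gamma (x + 1) / x ^ (1 - a)) := h2
    _ = Real.Gamma (x + 1) := by field_simp

lemma gamma_ge_one {a : ℝ} (ha0 : 0 < a) (ha1 : a < 1) : 1 ≤ Real.Gamma a := by
  set θ : ℝ := 1 / (2 - a) with hθ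
  have hθ0 : 0 < θ := by rw [hθ]; exact div_pos one_pos (by linarith)
  have hθ1 : θ ≤ 1 := by
    rw [hθ, div_le_one (by linarith)]; linarith
  have h := gamma_combo ha0 (by norm_num : (0:ℝ) < 2) hθ0.le hθ1
  have h2a : (2:ℝ) - a ≠ 0 := by linarith
  have harg : θ * a + (1 - θ) * 2 = 1 := by
    rw [hθ]; field_simp; ring
  rw [harg, Real.Gamma_one, Real.Gamma_two, Real.one_rpow, mul_one] at h
  by_contra hc
  push_neg at hc
  have : Real.Gamma a ^ θ < 1 :=
    Real.rpow_lt_one (Real.Gamma_pos_of_pos ha0).le hc hθ0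
  linarith

lemma rpow_le_mul_rpow_aux {x y c pp : ℝ} (hx : 0 ≤ x) (hy : 0 ≤ y) (hxy : x ≤ c * y)
    (hc : 1 ≤ c) (hp0 : 0 ≤ pp) (hp1 : pp ≤ 1) : x ^ pp ≤ c * y ^ pp := by
  have hc0 : (0:ℝ) ≤ c := by linarith
  calc x ^ pp ≤ (c * y) ^ pp := Real.rpow_le_rpow hx hxy hp0
    _ = c ^ pp * y ^ pp := Real.mul_rpow hc0 hy
    _ ≤ c * y ^ pp := by
        have h1 : c ^ pp ≤ c ^ (1:ℝ) := Real.rpow_le_rpow_of_exponent_le hc hp1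
        rw [Real.rpow_one] at h1
        exact mul_le_mul_of_nonneg_right h1 (Real.rpow_nonneg hy pp)

lemma rpow_neg_antitone_aux {x y pp : ℝ} (hx : 0 < x) (hxy : x ≤ y) (hp : 0 ≤ pp) :
    y ^ (-pp) ≤ x ^ (-pp) := by
  have hy : 0 < y := lt_of_lt_of_le hx hxy
  rw [Real.rpow_neg hy.le, Real.rpow_neg hx.le]
  have h1 : x ^ pp ≤ y ^ pp := Real.rpow_le_rpow hx.le hxy hp
  have h2 : (0:ℝ) < x ^ pp := Real.rpow_pos_of_pos hx pp
  exact inv_anti₀ h2 h1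

lemma rpow_neg_le_mul_rpow_neg_aux {x y c pp : ℝ} (hx : 0 < x) (hy : 0 < y) (hxy : x ≤ c * y)
    (hc : 1 ≤ c) (hp0 : 0 ≤ pp) (hp1 : pp ≤ 1) : y ^ (-pp) ≤ c * x ^ (-pp) := by
  have h1 : x ^ pp ≤ c * y ^ pp := rpow_le_mul_rpow_aux hx.le hy.le hxy hc hp0 hp1
  have hxp : (0:ℝ) < x ^ pp := Real.rpow_pos_of_pos hx pp
  have hyp : (0:ℝ) < y ^ pp := Real.rpow_pos_of_pos hy pp
  rw [Real.rpow_neg hy.le, Real.rpow_neg hx.le, ← one_div, ← one_div, mul_one_div,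
    div_le_div_iff₀ hyp hxp]
  linarith

set_option maxHeartbeats 1000000 in
/-- For `m ≥ 1`, `δ > -m`, let `μ n i = E[W_{n,i}]` be the expected in-degree of vertex `i`
in `G_n^{m,δ}`, given by the gamma-function formula obtained from the martingale identity.
Then there is a constant `C = C_{m,δ}` with
`|μ_{n,i}/(m+δ) + 1 - (n/i)^{1/(2+δ/m)}| ≤ C (n/i)^{1/(2+δ/m)} / i` for all `1 ≤ i ≤ n`. -/
theorem stmt18 (m : ℕ) (hm : 1 ≤ m) (δ : ℝ) (hδ : -(m : ℝ) < δ)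
    (μ : ℕ → ℕ → ℝ)
    (hμ : ∀ n i : ℕ, 1 ≤ i → i ≤ n →
      μ n i + ((m : ℝ) + δ)
        = (1 + δ / (m : ℝ))
            * (Real.Gamma ((n : ℝ) * m + 1)
                / Real.Gamma ((n : ℝ) * m + (1 + δ / (m : ℝ)) / (2 + δ / (m : ℝ))))
            * ∑ j ∈ Finset.range m,
                Real.Gamma (((i : ℝ) - 1) * m + ((j : ℝ) + 1) - 1
                    + (1 + δ / (m : ℝ)) / (2 + δ / (m : ℝ)))
                  / Real.Gamma (((i : ℝ) - 1) * m + ((j : ℝ) + 1))) :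
    ∃ C : ℝ, ∀ n i : ℕ, 1 ≤ i → i ≤ n →
      |μ n i / ((m : ℝ) + δ) + 1 - ((n : ℝ) / i) ^ (1 / (2 + δ / (m : ℝ)))|
        ≤ C * ((n : ℝ) / i) ^ (1 / (2 + δ / (m : ℝ))) / i := by
  have hm' : (0:ℝ) < m := by exact_mod_cast Nat.lt_of_lt_of_le Nat.zero_lt_one hm
  set q : ℝ := δ / m with hq_def
  have hq : -1 < q := by
    rw [hq_def, lt_div_iff₀ hm']; linarith
  have h1q : (0:ℝ) < 1 + q := by linarith
  have h2q : (0:ℝ) < 2 + q := by linarith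
  set a : ℝ := (1 + q) / (2 + q) with ha_def
  set p : ℝ := 1 / (2 + q) with hp_def
  have ha0 : 0 < a := div_pos h1q h2q
  have ha1 : a < 1 := by rw [ha_def, div_lt_one h2q]; linarith
  have hp0 : 0 < p := div_pos one_pos h2q
  have hp1 : p ≤ 1 := by rw [hp_def, div_le_one h2q]; linarith
  have hpa : 1 - a = p := by rw [ha_def, hp_def]; field_simp; norm_num
  have hmδ : (0:ℝ) < (m:ℝ) + δ := by linarith
  refine ⟨2 * m * Real.Gamma a + 5, fun n i hi hin => ?_⟩
  -- basic casts
  have hi' : (1:ℝ) ≤ (i:ℝ) := by exact_mod_cast hi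
  have hi0 : (0:ℝ) < (i:ℝ) := by linarith
  have hni : (i:ℝ) ≤ (n:ℝ) := by exact_mod_cast hin
  have hn0 : (0:ℝ) < (n:ℝ) := by linarith
  have hm1 : (1:ℝ) ≤ (m:ℝ) := by exact_mod_cast hm
  set N : ℝ := (n:ℝ) * m with hN_def
  have hN1 : (1:ℝ) ≤ N := by nlinarith
  have hN0 : (0:ℝ) < N := by linarith
  have hiN : (i:ℝ) ≤ N := by nlinarith
  set A : ℝ := Real.Gamma (N + 1) / Real.Gamma (N + a) with hA_def
  set S : ℝ := ∑ j ∈ Finset.range m,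
      Real.Gamma (((i : ℝ) - 1) * m + ((j : ℝ) + 1) - 1 + a)
        / Real.Gamma (((i : ℝ) - 1) * m + ((j : ℝ) + 1)) with hS_def
  -- the exact formula
  have hX : μ n i / ((m:ℝ) + δ) + 1 = A * S / m := by
    have h := hμ n i hi hin
    have h2 : μ n i = (1 + q) * A * S - ((m:ℝ) + δ) := by linarith
    rw [h2]
    have hq' : 1 + q = ((m:ℝ) + δ) / m := by rw [hq_def]; field_simp
    rw [hq']
    field_simp
    ring
  -- positivity of things
  have hGNa : 0 < Real.Gamma (N + a) := Real.Gamma_pos_of_pos (by linarith)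
  have hGN1 : 0 < Real.Gamma (N + 1) := Real.Gamma_pos_of_pos (by linarith)
  have hGa1 : 1 ≤ Real.Gamma a := gamma_ge_one ha0 ha1
  have hGaP : (0:ℝ) < Real.Gamma a := by linarith
  have h2mG : (0:ℝ) ≤ 2 * (m:ℝ) * Real.Gamma a :=
    mul_nonneg (mul_nonneg (by norm_num) hm'.le) hGaP.le
  -- bounds on A
  have hA_low : N ^ p ≤ A := by
    have h := gautschi_low ha0 ha1 hN0
    rw [hpa] at h
    rw [hA_def, le_div_iff₀ hGNa]
    exact h
  have hA_up : A ≤ (N + 1) ^ p := by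
    have h := gautschi_up ha0 ha1 hN0
    rw [hpa] at h
    rw [hA_def, div_le_iff₀ hGNa]
    calc Real.Gamma (N + 1) ≤ (N + a) ^ p * Real.Gamma (N + a) := h
      _ ≤ (N + 1) ^ p * Real.Gamma (N + a) := by
          have : (N + a) ^ p ≤ (N + 1) ^ p :=
            Real.rpow_le_rpow (by linarith) (by linarith) hp0.le
          exact mul_le_mul_of_nonneg_right this hGNa.le
  -- term bounds
  have him : (1:ℝ) ≤ (i:ℝ) * m := by nlinarith
  have him0 : (0:ℝ) < (i:ℝ) * m := by linarith
  have hterm_low : ∀ j ∈ Finset.range m,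
      ((i:ℝ) * m) ^ (-p) ≤ Real.Gamma (((i : ℝ) - 1) * m + ((j : ℝ) + 1) - 1 + a)
        / Real.Gamma (((i : ℝ) - 1) * m + ((j : ℝ) + 1)) := by
    intro j hj
    have hjm : (j:ℝ) ≤ (m:ℝ) - 1 := by
      have : (j:ℝ) + 1 ≤ (m:ℝ) := by exact_mod_cast Finset.mem_range.mp hj
      linarith
    set k : ℝ := ((i:ℝ) - 1) * m + j with hk_def
    have hk0 : 0 ≤ k := by
      have : (0:ℝ) ≤ (j:ℝ) := Nat.cast_nonneg j
      nlinarith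
    have harg1 : ((i : ℝ) - 1) * m + ((j : ℝ) + 1) - 1 + a = k + a := by rw [hk_def]; ring
    have harg2 : ((i : ℝ) - 1) * m + ((j : ℝ) + 1) = k + 1 := by rw [hk_def]; ring
    rw [harg1, harg2]
    have hkub : k + a ≤ (i:ℝ) * m := by
      have : k ≤ (i:ℝ) * m - 1 := by rw [hk_def]; nlinarith
      linarith
    rcases hk0.eq_or_lt with hk | hk
    · -- k = 0
      rw [← hk, zero_add, zero_add, Real.Gamma_one, div_one]
      calc ((i:ℝ) * m) ^ (-p) ≤ 1 :=
            Real.rpow_le_one_of_one_le_of_nonpos him (by linarith)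
        _ ≤ Real.Gamma a := hGa1
    · -- 0 < k
      have hGka : 0 < Real.Gamma (k + a) := Real.Gamma_pos_of_pos (by linarith)
      have hGk1 : 0 < Real.Gamma (k + 1) := Real.Gamma_pos_of_pos (by linarith)
      have hgu := gautschi_up ha0 ha1 hk
      rw [hpa] at hgu
      have h1 : (k + a) ^ (-p) ≤ Real.Gamma (k + a) / Real.Gamma (k + 1) := by
        rw [le_div_iff₀ hGk1, Real.rpow_neg (by linarith)]
        have hkap : (0:ℝ) < (k + a) ^ p := Real.rpow_pos_of_pos (by linarith) p
        rw [inv_mul_le_iff₀ hkap]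
        linarith [hgu]
      calc ((i:ℝ) * m) ^ (-p) ≤ (k + a) ^ (-p) :=
            rpow_neg_antitone_aux (by linarith) hkub hp0.le
        _ ≤ _ := h1
  -- lower bound on S
  have hS_low : (m:ℝ) * ((i:ℝ) * m) ^ (-p) ≤ S := by
    rw [hS_def]
    calc (m:ℝ) * ((i:ℝ) * m) ^ (-p)
        = ∑ _j ∈ Finset.range m, ((i:ℝ) * m) ^ (-p) := by
          rw [Finset.sum_const, Finset.card_range, nsmul_eq_mul]
      _ ≤ _ := Finset.sum_le_sum hterm_low
  -- X ≥ t
  set t : ℝ := ((n:ℝ) / i) ^ p with ht_def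
  have ht_eq : t = N ^ p * ((i:ℝ) * m) ^ (-p) := by
    rw [ht_def, Real.rpow_neg him0.le, hN_def]
    rw [show (n:ℝ) / i = ((n:ℝ) * m) / ((i:ℝ) * m) by field_simp]
    rw [Real.div_rpow (by positivity) him0.le]
    rw [div_eq_mul_inv]
  have ht_pos : 0 < t := Real.rpow_pos_of_pos (by positivity) p
  have hS_pos : 0 < S := lt_of_lt_of_le (by positivity) hS_low
  have hA_pos : 0 < A := lt_of_lt_of_le (Real.rpow_pos_of_pos hN0 p) hA_low
  have hXt : t ≤ A * S / m := by
    rw [le_div_iff₀ hm', ht_eq]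
    calc N ^ p * ((i:ℝ) * m) ^ (-p) * m = N ^ p * ((m:ℝ) * ((i:ℝ) * m) ^ (-p)) := by ring
      _ ≤ A * S := by
          apply mul_le_mul hA_low hS_low (by positivity) hA_pos.le
  -- upper bound, by cases on i
  have hup : A * S / m - t ≤ (2 * m * Real.Gamma a + 5) * t / i := by
    rcases eq_or_lt_of_le hi' with h1 | h2
    · -- i = 1
      have hieq : (i:ℝ) = 1 := h1.symm
      have hS_up : S ≤ (m:ℝ) * Real.Gamma a := by
        rw [hS_def]
        calc S ≤ ∑ _j ∈ Finset.range m, Real.Gamma a := by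
              apply Finset.sum_le_sum
              intro j hj
              have hjm : (j:ℝ) ≤ (m:ℝ) - 1 := by
                have : (j:ℝ) + 1 ≤ (m:ℝ) := by exact_mod_cast Finset.mem_range.mp hj
                linarith
              set k : ℝ := ((i:ℝ) - 1) * m + j with hk_def
              have hkj : k = (j:ℝ) := by rw [hk_def, hieq]; ring
              have harg1 : ((i : ℝ) - 1) * m + ((j : ℝ) + 1) - 1 + a = k + a := by
                rw [hk_def]; ring
              have harg2 : ((i : ℝ) - 1) * m + ((j : ℝ) + 1) = k + 1 := by rw [hk_def]; ring
              rw [harg1, harg2]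
              rcases Nat.eq_zero_or_pos j with hj0 | hj0
              · rw [hkj, hj0]
                norm_num [Real.Gamma_one]
              · have hk1 : (1:ℝ) ≤ k := by rw [hkj]; exact_mod_cast hj0
                have hGka : 0 < Real.Gamma (k + a) := Real.Gamma_pos_of_pos (by linarith)
                have hGk1 : 0 < Real.Gamma (k + 1) := Real.Gamma_pos_of_pos (by linarith)
                have hgl := gautschi_low ha0 ha1 (show (0:ℝ) < k by linarith)
                rw [hpa] at hgl
                have hkp1 : (1:ℝ) ≤ k ^ p := Real.one_le_rpow hk1 hp0.le
                rw [div_le_iff₀ hGk1]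
                calc Real.Gamma (k + a) ≤ k ^ p * Real.Gamma (k + a) :=
                      le_mul_of_one_le_left hGka.le hkp1
                  _ ≤ Real.Gamma (k + 1) := hgl
                  _ ≤ Real.Gamma a * Real.Gamma (k + 1) :=
                      le_mul_of_one_le_left hGk1.le hGa1
          _ = (m:ℝ) * Real.Gamma a := by
              rw [Finset.sum_const, Finset.card_range, nsmul_eq_mul]
      have hGa0 : (0:ℝ) < Real.Gamma a := by linarith
      have htn : t = (n:ℝ) ^ p := by rw [ht_def, hieq, div_one]
      have hNp : (N:ℝ) + 1 ≤ 2 * N := by linarith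
      have hN1p : (N + 1) ^ p ≤ 2 * ((m:ℝ) * (n:ℝ) ^ p) := by
        calc (N + 1) ^ p ≤ 2 * N ^ p :=
              rpow_le_mul_rpow_aux (by linarith) hN0.le hNp one_le_two hp0.le hp1
          _ ≤ 2 * ((m:ℝ) * (n:ℝ) ^ p) := by
              have hNe : N ^ p = (n:ℝ) ^ p * (m:ℝ) ^ p := by
                rw [hN_def, Real.mul_rpow hn0.le hm'.le]
              have hmp : (m:ℝ) ^ p ≤ (m:ℝ) := by
                have := Real.rpow_le_rpow_of_exponent_le hm1 hp1
                rwa [Real.rpow_one] at this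
              have hnp : (0:ℝ) < (n:ℝ) ^ p := Real.rpow_pos_of_pos hn0 p
              rw [hNe]
              have := mul_le_mul_of_nonneg_left hmp hnp.le
              linarith
      have hfin : A * S / m ≤ 2 * (m:ℝ) * Real.Gamma a * t := by
        rw [div_le_iff₀ hm', htn]
        calc A * S ≤ (N + 1) ^ p * ((m:ℝ) * Real.Gamma a) := by
              apply mul_le_mul hA_up hS_up hS_pos.le (by positivity)
          _ ≤ 2 * ((m:ℝ) * (n:ℝ) ^ p) * ((m:ℝ) * Real.Gamma a) := by
              have : (0:ℝ) ≤ (m:ℝ) * Real.Gamma a := by positivity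
              exact mul_le_mul_of_nonneg_right hN1p this
          _ = 2 * (m:ℝ) * Real.Gamma a * (n:ℝ) ^ p * (m:ℝ) := by ring
      rw [hieq, div_one]
      have hexp : (2 * (m:ℝ) * Real.Gamma a + 5) * t
          = 2 * (m:ℝ) * Real.Gamma a * t + 5 * t := by ring
      rw [hexp]
      linarith [ht_pos, hfin]
    · -- i ≥ 2
      have hi2 : (2:ℝ) ≤ (i:ℝ) := by
        have : (1:ℕ) < i := by exact_mod_cast h2
        exact_mod_cast this
      have him1 : (1:ℝ) ≤ ((i:ℝ) - 1) * m := by nlinarith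
      have him1' : (0:ℝ) < ((i:ℝ) - 1) * m := by linarith
      have hterm_up : ∀ j ∈ Finset.range m,
          Real.Gamma (((i : ℝ) - 1) * m + ((j : ℝ) + 1) - 1 + a)
            / Real.Gamma (((i : ℝ) - 1) * m + ((j : ℝ) + 1))
            ≤ (((i:ℝ) - 1) * m) ^ (-p) := by
        intro j hj
        set k : ℝ := ((i:ℝ) - 1) * m + j with hk_def
        have hjnn : (0:ℝ) ≤ (j:ℝ) := Nat.cast_nonneg j
        have hklow : ((i:ℝ) - 1) * m ≤ k := by rw [hk_def]; linarith
        have hkpos : (0:ℝ) < k := by linarith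
        have harg1 : ((i : ℝ) - 1) * m + ((j : ℝ) + 1) - 1 + a = k + a := by rw [hk_def]; ring
        have harg2 : ((i : ℝ) - 1) * m + ((j : ℝ) + 1) = k + 1 := by rw [hk_def]; ring
        rw [harg1, harg2]
        have hGka : 0 < Real.Gamma (k + a) := Real.Gamma_pos_of_pos (by linarith)
        have hGk1 : 0 < Real.Gamma (k + 1) := Real.Gamma_pos_of_pos (by linarith)
        have hgl := gautschi_low ha0 ha1 hkpos
        rw [hpa] at hgl
        have hkp : (0:ℝ) < k ^ p := Real.rpow_pos_of_pos hkpos p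
        calc Real.Gamma (k + a) / Real.Gamma (k + 1) ≤ k ^ (-p) := by
              rw [div_le_iff₀ hGk1, Real.rpow_neg hkpos.le]
              rw [inv_mul_eq_div, le_div_iff₀ hkp, mul_comm]
              exact hgl
          _ ≤ (((i:ℝ) - 1) * m) ^ (-p) := rpow_neg_antitone_aux him1' hklow hp0.le
      have hS_up : S ≤ (m:ℝ) * (((i:ℝ) - 1) * m) ^ (-p) := by
        rw [hS_def]
        calc S ≤ ∑ _j ∈ Finset.range m, (((i:ℝ) - 1) * m) ^ (-p) :=
              Finset.sum_le_sum hterm_up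
          _ = (m:ℝ) * (((i:ℝ) - 1) * m) ^ (-p) := by
              rw [Finset.sum_const, Finset.card_range, nsmul_eq_mul]
      -- (N+1)^p ≤ (1+1/i) N^p
      have hc1 : (N + 1) ^ p ≤ (1 + 1/(i:ℝ)) * N ^ p := by
        apply rpow_le_mul_rpow_aux (by linarith) hN0.le _ (by
          have : (0:ℝ) < 1/(i:ℝ) := by positivity
          linarith) hp0.le hp1
        have hNi : (1:ℝ) ≤ N / i := (one_le_div hi0).mpr hiN
        have : N + 1 ≤ N + N / i := by linarith
        calc N + 1 ≤ N + N / i := this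
          _ = (1 + 1/(i:ℝ)) * N := by ring
      -- ((i-1)m)^{-p} ≤ (1+2/i)(im)^{-p}
      have h2i : 2/(i:ℝ) ≤ 1 := by rw [div_le_one hi0]; linarith
      have hc2 : (((i:ℝ) - 1) * m) ^ (-p) ≤ (1 + 2/(i:ℝ)) * ((i:ℝ) * m) ^ (-p) := by
        apply rpow_neg_le_mul_rpow_neg_aux him0 him1' _ (by
          have : (0:ℝ) < 2/(i:ℝ) := by positivity
          linarith) hp0.le hp1
        have hexp2 : (1 + 2/(i:ℝ)) * (((i:ℝ) - 1) * m) = (i:ℝ) * m + (1 - 2/(i:ℝ)) * (m:ℝ) := by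
          field_simp
          ring
        have hnn2 : (0:ℝ) ≤ (1 - 2/(i:ℝ)) * (m:ℝ) := mul_nonneg (by linarith) hm'.le
        linarith
      have hchain : A * S / m ≤ (1 + 1/(i:ℝ)) * (1 + 2/(i:ℝ)) * t := by
        rw [div_le_iff₀ hm', ht_eq]
        calc A * S ≤ (N + 1) ^ p * ((m:ℝ) * (((i:ℝ) - 1) * m) ^ (-p)) :=
              mul_le_mul hA_up hS_up hS_pos.le (by positivity)
          _ ≤ ((1 + 1/(i:ℝ)) * N ^ p) * ((m:ℝ) * ((1 + 2/(i:ℝ)) * ((i:ℝ) * m) ^ (-p))) := by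
              apply mul_le_mul hc1 _ (by positivity) (by positivity)
              exact mul_le_mul_of_nonneg_left hc2 hm'.le
          _ = (1 + 1/(i:ℝ)) * (1 + 2/(i:ℝ)) * (N ^ p * ((i:ℝ) * m) ^ (-p)) * m := by ring
      have hx1 : 1/(i:ℝ) ≤ 1 := by rw [div_le_one hi0]; exact hi'
      have hx0 : (0:ℝ) < 1/(i:ℝ) := by positivity
      have hfac : (1 + 1/(i:ℝ)) * (1 + 2/(i:ℝ)) ≤ 1 + 5/(i:ℝ) := by
        have hxx : (1/(i:ℝ)) * (1/(i:ℝ)) ≤ 1/(i:ℝ) := mul_le_of_le_one_left hx0.le hx1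
        have hexp3 : (1 + 1/(i:ℝ)) * (1 + 2/(i:ℝ))
            = 1 + 3 * (1/(i:ℝ)) + 2 * ((1/(i:ℝ)) * (1/(i:ℝ))) := by ring
        have h5 : 5/(i:ℝ) = 5 * (1/(i:ℝ)) := by ring
        rw [hexp3, h5]
        linarith
      have hfin : A * S / m ≤ (1 + 5/(i:ℝ)) * t := by
        calc A * S / m ≤ (1 + 1/(i:ℝ)) * (1 + 2/(i:ℝ)) * t := hchain
          _ ≤ (1 + 5/(i:ℝ)) * t := mul_le_mul_of_nonneg_right hfac ht_pos.le
      have hnn : 0 ≤ 2 * (m:ℝ) * Real.Gamma a * t / (i:ℝ) :=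
        div_nonneg (mul_nonneg h2mG ht_pos.le) hi0.le
      have hsplit : (2 * (m:ℝ) * Real.Gamma a + 5) * t / (i:ℝ)
          = 2 * (m:ℝ) * Real.Gamma a * t / (i:ℝ) + 5 * t / (i:ℝ) := by ring
      have h5t : (1 + 5/(i:ℝ)) * t - t = 5 * t / (i:ℝ) := by ring
      rw [hsplit]
      linarith
  have habs : |μ n i / ((m:ℝ) + δ) + 1 - t| ≤ (2 * m * Real.Gamma a + 5) * t / i := by
    rw [hX, abs_le]
    constructor
    · have : (0:ℝ) ≤ (2 * m * Real.Gamma a + 5) * t / i :=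
        div_nonneg (mul_nonneg (by linarith) ht_pos.le) hi0.le
      linarith
    · linarith
  exact habs
end
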